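/- arXiv:1706.09286 — 10 statements merged into one kernel-verified Lean document; each statement's English description precedes it below -/
import Mathlib

section
/- If a finite p-group P contains a cyclic subgroup of order p^{k_1} and an elementary abelian subgroup of rank k_2, then |P| ≥ p^{k_1 + k_2 - 1}. -/
/-- If a finite `p`-group `P` contains a cyclic subgroup of order `p ^ k₁` and an
elementary abelian subgroup of rank `k₂` (order `p ^ k₂`),
then `|P| ≥ p ^ (k₁ + k₂ - 1)`. -/
theorem stmt0 {p : ℕ} (hp : p.Prime) (P : Type*) [Group P] [Finite P]
    (hP : IsPGroup p P) (k₁ k₂ : ℕ) (H K : Subgroup P)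
    (hHcyc : IsCyclic H) (hHcard : Nat.card H = p ^ k₁)
    (hKab : ∀ a b : K, a * b = b * a) (hKexp : ∀ a : K, a ^ p = 1)
    (hKcard : Nat.card K = p ^ k₂) :
    p ^ (k₁ + k₂ - 1) ≤ Nat.card P := by
  -- H ⊓ K is cyclic (subgroup of cyclic H) of exponent dividing p, so card ∣ p
  have hcycA : IsCyclic ↥(H ⊓ K) := by
    have : IsCyclic ((H ⊓ K).subgroupOf H) := Subgroup.isCyclic _
    exact isCyclic_of_surjective (Subgroup.subgroupOfEquivOfLe (inf_le_left : H ⊓ K ≤ H))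
      (Subgroup.subgroupOfEquivOfLe (inf_le_left : H ⊓ K ≤ H)).surjective
  have hexpA : ∀ a : ↥(H ⊓ K), a ^ p = 1 := by
    intro a
    have haK : (a : P) ∈ K := a.2.2
    have := hKexp ⟨(a : P), haK⟩
    have h2 : ((a : P)) ^ p = 1 := by
      simpa [Subgroup.coe_pow] using congrArg (Subtype.val) this
    ext
    simpa [Subgroup.coe_pow] using h2
  have hAdvd : Nat.card ↥(H ⊓ K) ∣ p := by
    rw [← IsCyclic.exponent_eq_card]
    exact Monoid.exponent_dvd_of_forall_pow_eq_one hexpA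
  have hAle : Nat.card ↥(H ⊓ K) ≤ p := Nat.le_of_dvd hp.pos hAdvd
  -- card K = relindex H K * card (H ⊓ K)
  have hKeq : H.relIndex K * Nat.card ↥(H ⊓ K) = Nat.card K := by
    have := Subgroup.index_mul_card (H.subgroupOf K)
    rw [show Nat.card ↥(H.subgroupOf K) = Nat.card ↥(H ⊓ K) from
      Nat.card_congr (((MulEquiv.subgroupCongr (Subgroup.inf_subgroupOf_right H K)).symm.trans
        (Subgroup.subgroupOfEquivOfLe (inf_le_right : H ⊓ K ≤ K))).toEquiv)] at this
    exact this
  -- relindex H K ≤ H.index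
  have hrel : H.relIndex K ≤ H.index := by
    have h0 : H.relIndex ⊤ ≠ 0 := by
      rw [Subgroup.relIndex_top_right]
      exact Subgroup.index_ne_zero_of_finite
    have := Subgroup.relIndex_le_of_le_right (le_top : K ≤ ⊤) h0
    rwa [Subgroup.relIndex_top_right] at this
  -- combine: p^(k₁+k₂) ≤ card P * p
  have hmain : p ^ (k₁ + k₂) ≤ Nat.card P * p := by
    calc p ^ (k₁ + k₂) = Nat.card H * Nat.card K := by
          rw [hHcard, hKcard, pow_add]
      _ = Nat.card H * (H.relIndex K * Nat.card ↥(H ⊓ K)) := by rw [hKeq]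
      _ ≤ Nat.card H * (H.index * p) := by
          exact Nat.mul_le_mul_left _ (Nat.mul_le_mul hrel hAle)
      _ = (H.index * Nat.card H) * p := by ring
      _ = Nat.card P * p := by rw [Subgroup.index_mul_card]
  rcases Nat.eq_zero_or_pos (k₁ + k₂) with h0 | hpos
  · simp [h0, Nat.one_le_iff_ne_zero, Nat.card_pos.ne']
  · obtain ⟨n, hn⟩ := Nat.exists_eq_add_of_le hpos
    rw [hn] at hmain ⊢
    have h1 : p ^ (Nat.succ 0 + n) = p ^ n * p := by ring
    rw [h1] at hmain
    have := Nat.le_of_mul_le_mul_right hmain hp.pos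
    simpa using this
end

section
/- Let p be a prime and G a finite group such that every group of order p^k embeds into G. Then p^{2k-1} divides |G|. -/
private lemma relindex_mul_card_inf {G : Type*} [Group G] (E C : Subgroup G) :
    E.relIndex C * Nat.card ↥(E ⊓ C) = Nat.card ↥C := by
  have h : Nat.card ↥(E.subgroupOf C) = Nat.card ↥(E ⊓ C) := by
    rw [← Subgroup.inf_subgroupOf_right]
    exact Nat.card_congr (Subgroup.subgroupOfEquivOfLe inf_le_right).toEquiv
  rw [Subgroup.relIndex, ← h, Subgroup.index_mul_card]

/-- If every group of order `p ^ k` embeds into the finite group `G`,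
then `p ^ (2 * k - 1)` divides `|G|`. -/
theorem stmt1 {p : ℕ} (hp : p.Prime) (k : ℕ) (hk : 1 ≤ k)
    (G : Type*) [Group G] [Finite G]
    (hemb : ∀ (H : Type) [Group H] [Finite H], Nat.card H = p ^ k →
      ∃ f : H →* G, Function.Injective f) :
    p ^ (2 * k - 1) ∣ Nat.card G := by
  haveI : Fact p.Prime := ⟨hp⟩
  haveI : NeZero p := ⟨hp.ne_zero⟩
  haveI : NeZero (p ^ k) := ⟨pow_ne_zero k hp.ne_zero⟩
  -- the cyclic group of order `p ^ k` embeds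
  obtain ⟨f, hf⟩ := hemb (Multiplicative (ZMod (p ^ k)))
    ((Nat.card_congr (Multiplicative.toAdd (α := ZMod (p ^ k)))).trans (Nat.card_zmod _))
  set x : G := f (Multiplicative.ofAdd 1) with hxdef
  have hox : orderOf x = p ^ k := by
    rw [hxdef, orderOf_injective f hf, orderOf_ofAdd_eq_addOrderOf, ZMod.addOrderOf_one]
  -- the elementary abelian group of order `p ^ k` embeds
  obtain ⟨g, hg⟩ := hemb (Multiplicative (Fin k → ZMod p))
    (by
      rw [Nat.card_congr (Multiplicative.toAdd (α := Fin k → ZMod p)), Nat.card_fun,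
        Nat.card_zmod, Nat.card_eq_fintype_card, Fintype.card_fin])
  set E : Subgroup G := g.range with hEdef
  have hEcard : Nat.card ↥E = p ^ k := by
    rw [← Nat.card_congr (MonoidHom.ofInjective hg).toEquiv,
      Nat.card_congr (Multiplicative.toAdd (α := Fin k → ZMod p)), Nat.card_fun,
      Nat.card_zmod, Nat.card_eq_fintype_card, Fintype.card_fin]
  have hEp : ∀ e ∈ E, e ^ p = 1 := by
    rintro e ⟨a, rfl⟩
    rw [← map_pow, ← map_one g]
    congr 1
    have : (a ^ p).toAdd = (1 : Multiplicative (Fin k → ZMod p)).toAdd := by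
      rw [toAdd_pow, toAdd_one]
      funext i
      simp [nsmul_eq_mul, ZMod.natCast_self]
    exact Multiplicative.toAdd.injective this
  -- put both inside a common Sylow subgroup, conjugating the cyclic one
  have hCpg : IsPGroup p (Subgroup.zpowers x) :=
    IsPGroup.of_card (by rw [Nat.card_zpowers, hox])
  obtain ⟨Q, hQ⟩ := hCpg.exists_le_sylow
  have hEpg : IsPGroup p E := IsPGroup.of_card hEcard
  obtain ⟨P, hP⟩ := hEpg.exists_le_sylow
  obtain ⟨γ, hγ⟩ := MulAction.exists_smul_eq G Q P
  set y : G := γ * x * γ⁻¹ with hydef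
  have hoy : orderOf y = p ^ k := by
    have hsc : SemiconjBy γ x y := by rw [hydef, SemiconjBy]; group
    exact (hsc.orderOf_eq γ).symm.trans hox
  have hCP : Subgroup.zpowers y ≤ (P : Subgroup G) := by
    intro z hz
    obtain ⟨n, rfl⟩ := Subgroup.mem_zpowers_iff.mp hz
    have h1 : y ^ n = γ * x ^ n * γ⁻¹ := by rw [hydef]; exact conj_zpow
    have hx' : x ^ n ∈ (Q : Subgroup G) := hQ (zpow_mem (Subgroup.mem_zpowers x) n)
    rw [h1, ← hγ, Sylow.coe_subgroup_smul]
    simpa [MulAut.smul_def, MulAut.conj_apply] using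
      Subgroup.smul_mem_pointwise_smul _ (MulAut.conj γ) _ hx'
  set C : Subgroup G := Subgroup.zpowers y with hCdef
  have hCcard : Nat.card ↥C = p ^ k := by rw [hCdef, Nat.card_zpowers, hoy]
  -- the intersection is small
  have hEC : E ⊓ C ≤ Subgroup.zpowers (y ^ p ^ (k - 1)) := by
    rintro z ⟨hzE, hzC⟩
    obtain ⟨n, rfl⟩ := Subgroup.mem_zpowers_iff.mp hzC
    have h1 : (y ^ n) ^ p = 1 := hEp _ hzE
    have h2 : y ^ (n * (p : ℤ)) = 1 := by rw [zpow_mul, zpow_natCast]; exact h1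
    have h3 : ((p : ℤ)) ^ k ∣ n * p := by
      have h4 := orderOf_dvd_iff_zpow_eq_one.mpr h2
      rwa [hoy, Nat.cast_pow] at h4
    have h4 : ((p : ℤ)) ^ (k - 1) ∣ n := by
      have hk' : (p : ℤ) ^ (k - 1) * p = (p : ℤ) ^ k := by
        rw [← pow_succ]; congr 1; omega
      rw [← hk'] at h3
      exact (mul_dvd_mul_iff_right
        (by exact_mod_cast hp.ne_zero : (p : ℤ) ≠ 0)).mp h3
    obtain ⟨m, rfl⟩ := h4
    refine Subgroup.mem_zpowers_iff.mpr ⟨m, ?_⟩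
    rw [← zpow_natCast y (p ^ (k - 1)), ← zpow_mul]
    push_cast
    ring_nf
  have hinf_le : Nat.card ↥(E ⊓ C) ≤ p := by
    calc Nat.card ↥(E ⊓ C) ≤ Nat.card ↥(Subgroup.zpowers (y ^ p ^ (k - 1))) :=
          Subgroup.card_le_of_le hEC
      _ = p := by
          rw [Nat.card_zpowers, orderOf_pow, hoy,
            Nat.gcd_eq_right (pow_dvd_pow p (by omega)), Nat.pow_div (by omega) hp.pos, show k - (k - 1) = 1 from by omega, pow_one]
  -- relindex estimates
  have hinf_pos : 0 < Nat.card ↥(E ⊓ C) := Nat.card_pos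
  have hrC : p ^ (k - 1) ≤ E.relIndex C := by
    have h1 : E.relIndex C * Nat.card ↥(E ⊓ C) = p ^ k :=
      (relindex_mul_card_inf E C).trans hCcard
    by_contra hcon
    push_neg at hcon
    have : E.relIndex C * Nat.card ↥(E ⊓ C) < p ^ (k - 1) * p :=
      Nat.mul_lt_mul_of_lt_of_le hcon hinf_le (by omega)
    rw [h1, ← pow_succ, show k - 1 + 1 = k from by omega] at this
    exact absurd this (lt_irrefl _)
  have hES_ne : E.relIndex (C ⊔ E) ≠ 0 := by
    rw [Subgroup.relIndex]
    exact Subgroup.index_ne_zero_of_finite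
  have hrS : p ^ (k - 1) ≤ E.relIndex (C ⊔ E) :=
    hrC.trans (Subgroup.relIndex_le_of_le_right le_sup_left hES_ne)
  have hScard : Nat.card ↥(C ⊔ E) = E.relIndex (C ⊔ E) * p ^ k := by
    rw [← hEcard, ← relindex_mul_card_inf E (C ⊔ E), inf_of_le_left le_sup_right]
  have hSge : p ^ (2 * k - 1) ≤ Nat.card ↥(C ⊔ E) := by
    rw [hScard]
    calc p ^ (2 * k - 1) = p ^ (k - 1) * p ^ k := by rw [← pow_add]; congr 1; omega
      _ ≤ _ := Nat.mul_le_mul_right _ hrS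
  have hSpg : IsPGroup p ↥(C ⊔ E) := P.2.to_le (sup_le hCP hP)
  obtain ⟨m, hm⟩ := hSpg.exists_card_eq
  have hmge : 2 * k - 1 ≤ m := by
    rw [hm] at hSge
    exact (Nat.pow_le_pow_iff_right hp.one_lt).mp hSge
  calc p ^ (2 * k - 1) ∣ p ^ m := pow_dvd_pow p hmge
    _ = Nat.card ↥(C ⊔ E) := hm.symm
    _ ∣ Nat.card G := Subgroup.card_subgroup_dvd_card _
end

section
/- Let G be a group of order 32 containing an abelian subgroup H of order 16 and exponent at most 4. Then not every group of order 8 embeds into G; specifically, it is impossible that C_8, C_2 × C_2 × C_2, and the quaternion group Q_8 all embed into G. -/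
section Helpers
variable {G : Type*} [Group G]

private lemma aux_mul_mem {H : Subgroup G} (h2 : H.index = 2) {a b : G} (ha : a ∉ H) (hb : b ∉ H) :
    a * b ∈ H := by
  rw [Subgroup.mul_mem_iff_of_index_two h2]
  tauto

private lemma aux_normal {H : Subgroup G} (h2 : H.index = 2) : H.Normal := by
  constructor
  intro h hh g
  by_cases hg : g ∈ H
  · exact H.mul_mem (H.mul_mem hg hh) (H.inv_mem hg)
  · have h1 : g * h ∉ H := fun hm => hg (by simpa using H.mul_mem hm (H.inv_mem hh))
    exact aux_mul_mem h2 h1 (fun hm => hg (by simpa using H.inv_mem hm))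

private lemma aux_orderOf_four {a : G} (h4 : a ^ 4 = 1) (h2 : a ^ 2 ≠ 1) : orderOf a = 4 := by
  obtain ⟨d, hd'⟩ : ∃ d, orderOf a = d := ⟨_, rfl⟩
  have hdvd : d ∣ 4 := hd' ▸ orderOf_dvd_of_pow_eq_one h4
  have hle : d ≤ 4 := Nat.le_of_dvd (by norm_num) hdvd
  have hpow := pow_orderOf_eq_one a
  rw [hd'] at hpow
  interval_cases d
  · exact absurd hdvd (by norm_num)
  · exact absurd (by rw [show (2:ℕ) = 1 + 1 by norm_num, pow_add, (by simpa using hpow : a = 1)]; simp) h2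
  · exact absurd hpow h2
  · exact absurd hdvd (by norm_num)
  · exact hd'

private lemma aux_zpowers_four {a b : G} (h4 : a ^ 4 = 1) (hb : b ∈ Subgroup.zpowers a) :
    b = 1 ∨ b = a ∨ b = a ^ 2 ∨ b = a ^ 3 := by
  obtain ⟨n, hn'⟩ := Subgroup.mem_zpowers_iff.mp hb
  have key : a ^ (4 : ℤ) = 1 := by rw [show (4:ℤ) = ((4:ℕ):ℤ) from rfl, zpow_natCast]; exact h4
  have hn : b = a ^ (n % 4) := by
    calc b = a ^ n := hn'.symm
    _ = a ^ (4 * (n / 4) + n % 4) := by rw [Int.mul_ediv_add_emod]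
    _ = a ^ (n % 4) := by rw [zpow_add, zpow_mul, key, one_zpow, one_mul]
  have hr1 : 0 ≤ n % 4 := Int.emod_nonneg n (by norm_num)
  have hr2 : n % 4 < 4 := Int.emod_lt_of_pos n (by norm_num)
  set r := n % 4 with hrdef
  clear_value r
  interval_cases r
  · left; rw [hn]; norm_num
  · right; left; rw [hn]; norm_num
  · right; right; left; rw [hn]; norm_cast
  · right; right; right; rw [hn]; norm_cast

private lemma aux_card_ker_mul_card_range {A B : Type*} [Group A] [Group B] [Finite A]
    (φ : A →* B) : Nat.card φ.range * Nat.card φ.ker = Nat.card A := by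
  rw [Subgroup.card_eq_card_quotient_mul_card_subgroup φ.ker,
    Nat.card_congr (QuotientGroup.quotientKerEquivRange φ).toEquiv]

private lemma aux_card_le_two {P : Subgroup G} (c : G) (h : ∀ p ∈ P, p = 1 ∨ p = c) :
    Nat.card P ≤ 2 := by
  have hsub : (P : Set G) ⊆ {1, c} := fun p hp => by rcases h p hp with h1 | h1 <;> simp [h1]
  calc Nat.card P = (P : Set G).ncard := Nat.card_coe_set_eq _
    _ ≤ ({1, c} : Set G).ncard := Set.ncard_le_ncard hsub (Set.toFinite _)
    _ ≤ 2 := by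
        apply le_trans (Set.ncard_insert_le _ _)
        simp [Set.ncard_singleton]

private lemma aux_nontriv_eq {R : Subgroup G} [Finite R] (hcard : Nat.card R ≤ 2) {a b : G}
    (haR : a ∈ R) (hbR : b ∈ R) (ha : a ≠ 1) (hb : b ≠ 1) : a = b := by
  by_contra hab
  have hinj : Function.Injective ![(1 : R), ⟨a, haR⟩, ⟨b, hbR⟩] := by
    intro i j hij
    fin_cases i <;> fin_cases j <;> simp_all [Subtype.ext_iff]
  have := Nat.card_le_card_of_injective _ hinj
  simp [Nat.card_eq_fintype_card] at this
  omega

end Helpers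

/-- If `G` has order 32 and contains an abelian subgroup `H` of order 16 and exponent at
most 4, then it is impossible that `C₈`, `C₂ × C₂ × C₂` and the quaternion group `Q₈`
all embed into `G`. -/
theorem stmt2 (G : Type*) [Group G] (hG : Nat.card G = 32)
    (H : Subgroup G) (hHcard : Nat.card H = 16)
    (hHab : ∀ a b : H, a * b = b * a) (hHexp : ∀ a : H, a ^ 4 = 1) :
    ¬ ((∃ f : Multiplicative (ZMod 8) →* G, Function.Injective f) ∧
       (∃ f : Multiplicative (ZMod 2 × ZMod 2 × ZMod 2) →* G, Function.Injective f) ∧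
       (∃ f : QuaternionGroup 2 →* G, Function.Injective f)) := by
  rintro ⟨⟨f, hf⟩, ⟨g, hg⟩, ⟨fq, hfq⟩⟩
  have hGfin : Finite G := Nat.finite_of_card_ne_zero (by omega)
  -- basic facts about H
  have hidx : H.index = 2 := by
    have := Subgroup.card_mul_index H
    rw [hHcard, hG] at this; omega
  haveI hnorm : H.Normal := aux_normal hidx
  have hQcard : Nat.card (G ⧸ H) = 2 := by rw [← Subgroup.index_eq_card, hidx]
  have hexp : ∀ y ∈ H, y ^ 4 = 1 := fun y hy => by
    simpa using congrArg Subtype.val (hHexp ⟨y, hy⟩)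
  have hcomm : ∀ a b : G, a ∈ H → b ∈ H → a * b = b * a := fun a b ha hb => by
    simpa using congrArg Subtype.val (hHab ⟨a, ha⟩ ⟨b, hb⟩)
  -- the element x of order 8
  set x : G := f (Multiplicative.ofAdd (1 : ZMod 8)) with hxdef
  have hx4 : x ^ 4 ≠ 1 := by
    intro h
    have h' : f ((Multiplicative.ofAdd (1 : ZMod 8)) ^ 4) = f 1 := by
      rw [f.map_pow, f.map_one]; exact h
    exact absurd (hf h') (by decide)
  have hxH : x ∉ H := fun hm => hx4 (hexp x hm)
  have hx2 : x ^ 2 ∈ H := Subgroup.sq_mem_of_index_two hidx x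
  have hx8 : x ^ 8 = 1 := by
    have := hexp _ hx2
    rw [← pow_mul] at this
    exact this
  have hxinvH : x⁻¹ ∉ H := fun hm => hxH (by simpa using H.inv_mem hm)
  -- Quaternion subgroup analysis
  set K : Subgroup (QuaternionGroup 2) := H.comap fq with hKdef
  have hcardQ8 : Nat.card (QuaternionGroup 2) = 8 := by
    simp [Nat.card_eq_fintype_card, QuaternionGroup.card]
  have hKnetop : K ≠ ⊤ := by
    intro htop
    have h1 : fq (.a 1) ∈ H := by
      have : (QuaternionGroup.a 1 : QuaternionGroup 2) ∈ K := htop ▸ Subgroup.mem_top _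
      exact this
    have h2 : fq (.xa 0) ∈ H := by
      have : (QuaternionGroup.xa 0 : QuaternionGroup 2) ∈ K := htop ▸ Subgroup.mem_top _
      exact this
    have := hcomm _ _ h1 h2
    rw [← map_mul, ← map_mul] at this
    exact absurd (hfq this) (by decide)
  have hKcard : Nat.card K = 4 := by
    set ψ : QuaternionGroup 2 →* G ⧸ H := (QuotientGroup.mk' H).comp fq with hψdef
    have hker : ψ.ker = K := by
      ext q
      simp [hψdef, MonoidHom.mem_ker, hKdef, Subgroup.mem_comap, QuotientGroup.eq_one_iff]
    have hprod := aux_card_ker_mul_card_range ψ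
    rw [hker, hcardQ8] at hprod
    have hrdvd : Nat.card ψ.range ∣ 2 := by
      have := Subgroup.card_subgroup_dvd_card ψ.range
      rwa [hQcard] at this
    have h12 : Nat.card ψ.range = 1 ∨ Nat.card ψ.range = 2 :=
      (Nat.dvd_prime Nat.prime_two).mp hrdvd
    rcases h12 with h1 | h1
    · rw [h1, one_mul] at hprod
      exact absurd (Subgroup.eq_top_of_card_eq K (by rw [hprod, hcardQ8])) hKnetop
    · rw [h1] at hprod
      omega
  obtain ⟨q, hqK, hq2⟩ : ∃ q ∈ K, q ^ 2 ≠ 1 := by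
    by_contra hc
    push_neg at hc
    have h2 : ∀ p ∈ K, p = 1 ∨ p = QuaternionGroup.a 2 := fun p hp =>
      (by decide : ∀ q : QuaternionGroup 2, q ^ 2 = 1 → q = 1 ∨ q = QuaternionGroup.a 2)
        p (hc p hp)
    have := aux_card_le_two _ h2
    omega
  set i : G := fq q with hidef
  have hiH : i ∈ H := hqK
  have hi4 : i ^ 4 = 1 := by
    rw [hidef, ← map_pow, (by decide : ∀ q : QuaternionGroup 2, q ^ 4 = 1) q, map_one]
  have hi2 : i ^ 2 ≠ 1 := by
    intro h
    apply hq2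
    apply hfq
    rw [map_pow, map_one]
    exact h
  obtain ⟨q', hq'K⟩ : ∃ q', q' ∉ K := by
    by_contra hc
    push_neg at hc
    exact hKnetop ((Subgroup.eq_top_iff' K).mpr hc)
  set j : G := fq q' with hjdef
  have hjH : j ∉ H := hq'K
  have hqcomm : q' * q ≠ q * q' := by
    intro hcq
    rcases (by decide : ∀ a b : QuaternionGroup 2, a ^ 2 ≠ 1 → b * a = a * b →
        (b = 1 ∨ b = a ∨ b = a ^ 2 ∨ b = a ^ 3)) q q' hq2 hcq with h | h | h | h
    · exact hq'K (h ▸ K.one_mem)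
    · exact hq'K (h ▸ hqK)
    · exact hq'K (h ▸ K.pow_mem hqK 2)
    · exact hq'K (h ▸ K.pow_mem hqK 3)
  have hjrel : j * i * j⁻¹ = i⁻¹ := by
    have h := (by decide : ∀ a b : QuaternionGroup 2, a ^ 2 ≠ 1 → b * a ≠ a * b →
        b * a * b⁻¹ = a⁻¹) q q' hq2 hqcomm
    rw [hidef, hjdef, ← map_inv, ← map_mul, ← map_mul, h, map_inv]
  have hji : j ^ 2 = i ^ 2 := by
    have hq'2 : q' ^ 2 ≠ 1 := by
      intro h
      rcases (by decide : ∀ p : QuaternionGroup 2, p ^ 2 = 1 → p = 1 ∨ p = QuaternionGroup.a 2)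
        q' h with rfl | h2
      · exact hq'K K.one_mem
      · apply hq'K
        rw [h2, ← (by decide : ∀ p : QuaternionGroup 2, p ^ 2 ≠ 1 → p ^ 2 = QuaternionGroup.a 2) q hq2]
        exact K.pow_mem hqK 2
    have h := (by decide : ∀ a b : QuaternionGroup 2, a ^ 2 ≠ 1 → b ^ 2 ≠ 1 → b ^ 2 = a ^ 2)
      q q' hq2 hq'2
    rw [hidef, hjdef, ← map_pow, ← map_pow, h]
  -- conjugation stays in H
  have hconj : ∀ h ∈ H, x⁻¹ * h * x ∈ H := fun h hh => by
    have := hnorm.conj_mem h hh x⁻¹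
    simpa using this
  -- the homomorphism φ : H →* G, φ(h) = (x⁻¹ h x) h
  set φ : ↥H →* G := {
    toFun := fun h => (x⁻¹ * (h : G) * x) * (h : G)
    map_one' := by simp
    map_mul' := by
      rintro ⟨a₁, ha₁⟩ ⟨a₂, ha₂⟩
      show x⁻¹ * (a₁ * a₂) * x * (a₁ * a₂) = (x⁻¹ * a₁ * x * a₁) * (x⁻¹ * a₂ * x * a₂)
      have hc : a₁ * (x⁻¹ * a₂ * x) = (x⁻¹ * a₂ * x) * a₁ := hcomm _ _ ha₁ (hconj a₂ ha₂)
      calc x⁻¹ * (a₁ * a₂) * x * (a₁ * a₂)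
          = x⁻¹ * a₁ * x * ((x⁻¹ * a₂ * x) * a₁) * a₂ := by group
        _ = x⁻¹ * a₁ * x * (a₁ * (x⁻¹ * a₂ * x)) * a₂ := by rw [hc]
        _ = (x⁻¹ * a₁ * x * a₁) * (x⁻¹ * a₂ * x * a₂) := by group
  } with hφdef
  have hφval : ∀ h : ↥H, φ h = (x⁻¹ * (h : G) * x) * (h : G) := fun h => rfl
  have hφcard := aux_card_ker_mul_card_range φ
  rw [hHcard] at hφcard
  -- case split on whether the elementary abelian group lands inside H
  by_cases hE : ∀ w, g w ∈ H
  · -- Case A : range g ⊆ H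
    set s : ↥H →* G := {
      toFun := fun h => (h : G) ^ 2
      map_one' := by simp
      map_mul' := by
        rintro ⟨a₁, ha₁⟩ ⟨a₂, ha₂⟩
        show ((a₁ * a₂ : G)) ^ 2 = a₁ ^ 2 * a₂ ^ 2
        have hc : a₂ * a₁ = a₁ * a₂ := hcomm _ _ ha₂ ha₁
        calc (a₁ * a₂) ^ 2 = a₁ * (a₂ * a₁) * a₂ := by rw [pow_two]; group
        _ = a₁ * (a₁ * a₂) * a₂ := by rw [hc]
        _ = a₁ ^ 2 * a₂ ^ 2 := by rw [pow_two, pow_two]; group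
    } with hsdef
    have hsval : ∀ h : ↥H, s h = (h : G) ^ 2 := fun _ => rfl
    have hscard := aux_card_ker_mul_card_range s
    rw [hHcard] at hscard
    have hw2 : ∀ w : Multiplicative (ZMod 2 × ZMod 2 × ZMod 2), w * w = 1 := by decide
    have hkmem : ∀ w : Multiplicative (ZMod 2 × ZMod 2 × ZMod 2),
        (⟨g w, hE w⟩ : ↥H) ∈ s.ker := fun w => by
      rw [MonoidHom.mem_ker, hsval]
      show (g w : G) ^ 2 = 1
      rw [pow_two, ← map_mul, hw2, map_one]
    have hkinj : Function.Injective
        (fun w : Multiplicative (ZMod 2 × ZMod 2 × ZMod 2) =>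
          (⟨⟨g w, hE w⟩, hkmem w⟩ : s.ker)) := by
      intro w1 w2 h12
      apply hg
      simpa [Subtype.ext_iff] using h12
    have hker8 : 8 ≤ Nat.card s.ker := by
      have := Nat.card_le_card_of_injective _ hkinj
      simpa [Nat.card_eq_fintype_card] using this
    have hsr2 : Nat.card s.range ≤ 2 := by
      by_contra hcon
      push_neg at hcon
      have : 3 * 8 ≤ Nat.card s.range * Nat.card s.ker :=
        Nat.mul_le_mul hcon hker8
      omega
    have hx4r : x ^ 4 ∈ s.range := ⟨⟨x ^ 2, hx2⟩, by rw [hsval]; show (x ^ 2) ^ 2 = x ^ 4; rw [← pow_mul]⟩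
    have hi2r : i ^ 2 ∈ s.range := ⟨⟨i, hiH⟩, by rw [hsval]⟩
    have hix : i ^ 2 = x ^ 4 := aux_nontriv_eq hsr2 hi2r hx4r hi2 hx4
    have hh₁ : x⁻¹ * j ∈ H := aux_mul_mem hidx hxinvH hjH
    have hφh₁ : φ ⟨x⁻¹ * j, hh₁⟩ = x ^ 2 := by
      rw [hφval]
      show (x⁻¹ * (x⁻¹ * j) * x) * (x⁻¹ * j) = x ^ 2
      have he : (x⁻¹ * (x⁻¹ * j) * x) * (x⁻¹ * j) = x⁻¹ * x⁻¹ * j ^ 2 := by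
        rw [pow_two]; group
      rw [he, hji, hix]
      have he2 : x⁻¹ * x⁻¹ * x ^ 4 = x ^ 2 := by group
      exact he2
    have h1 : φ (⟨x⁻¹ * j, hh₁⟩ ^ 2) = x ^ 4 := by rw [map_pow, hφh₁, ← pow_mul]
    have hsh₁ : (x⁻¹ * j) ^ 2 ∈ s.range := ⟨⟨x⁻¹ * j, hh₁⟩, by rw [hsval]⟩
    by_cases hh₁2 : (x⁻¹ * j) ^ 2 = 1
    · rw [show (⟨x⁻¹ * j, hh₁⟩ : ↥H) ^ 2 = 1 from Subtype.ext (by simpa using hh₁2),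
        map_one] at h1
      exact hx4 h1.symm
    · have hx4h : (x⁻¹ * j) ^ 2 = x ^ 4 := aux_nontriv_eq hsr2 hsh₁ hx4r hh₁2 hx4
      have h2 : φ (⟨x⁻¹ * j, hh₁⟩ ^ 2) = 1 := by
        have hval : (⟨x⁻¹ * j, hh₁⟩ : ↥H) ^ 2
            = ⟨x ^ 4, by rw [← hx4h]; exact H.pow_mem hh₁ 2⟩ :=
          Subtype.ext (by simpa using hx4h)
        rw [hval, hφval]
        show (x⁻¹ * (x ^ 4) * x) * (x ^ 4) = 1
        have he : (x⁻¹ * (x ^ 4) * x) * (x ^ 4) = x ^ 8 := by group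
        rw [he, hx8]
      exact hx4 (h1.symm.trans h2)
  · -- Case B : some element of elementary abelian group outside H
    push_neg at hE
    obtain ⟨w, hwH⟩ := hE
    set e : G := g w with hedef
    have hw2 : ∀ v : Multiplicative (ZMod 2 × ZMod 2 × ZMod 2), v * v = 1 := by decide
    have he2 : e * e = 1 := by rw [hedef, ← map_mul, hw2, map_one]
    have heinv : e⁻¹ = e := inv_eq_of_mul_eq_one_right he2
    have hh₀ : x⁻¹ * e ∈ H := aux_mul_mem hidx hxinvH hwH
    have hφh₀ : φ ⟨x⁻¹ * e, hh₀⟩ = x⁻¹ * x⁻¹ := by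
      rw [hφval]
      show x⁻¹ * (x⁻¹ * e) * x * (x⁻¹ * e) = x⁻¹ * x⁻¹
      have he' : x⁻¹ * (x⁻¹ * e) * x * (x⁻¹ * e) = x⁻¹ * x⁻¹ * (e * e) := by group
      rw [he', he2, mul_one]
    have hrmem : x⁻¹ * x⁻¹ ∈ φ.range := ⟨_, hφh₀⟩
    set rv : ↥φ.range := ⟨x⁻¹ * x⁻¹, hrmem⟩ with hrvdef
    have hrv4 : rv ^ 4 = 1 := by
      apply Subtype.ext
      have hcoe : ((rv ^ 4 : ↥φ.range) : G) = (x⁻¹ * x⁻¹) ^ 4 := by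
        simp [hrvdef]
      rw [hcoe]
      have he' : (x⁻¹ * x⁻¹) ^ 4 = (x ^ 8)⁻¹ := by group
      rw [he', hx8, inv_one]
      rfl
    have hrv2 : rv ^ 2 ≠ 1 := by
      intro hcon
      apply hx4
      have hcoe : ((rv ^ 2 : ↥φ.range) : G) = (x⁻¹ * x⁻¹) ^ 2 := by
        simp [hrvdef]
      have h1 : (x⁻¹ * x⁻¹) ^ 2 = 1 := by rw [← hcoe, hcon]; rfl
      have he' : (((x⁻¹ * x⁻¹) ^ 2)⁻¹ : G) = x ^ 4 := by group
      rw [← he', h1, inv_one]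
    have hor : orderOf rv = 4 := aux_orderOf_four hrv4 hrv2
    have h4dvd : 4 ∣ Nat.card φ.range := hor ▸ orderOf_dvd_natCard rv
    have hkle : Nat.card φ.ker ≤ 4 := by
      by_contra hcon
      push_neg at hcon
      have h4le : 4 ≤ Nat.card φ.range := Nat.le_of_dvd Nat.card_pos h4dvd
      have := Nat.mul_le_mul h4le hcon
      omega
    -- the kernel equals the powers of i
    set ih : ↥H := ⟨i, hiH⟩ with hihdef
    have hih4 : ih ^ 4 = 1 := by
      apply Subtype.ext
      simpa [hihdef] using hi4
    have hih2 : ih ^ 2 ≠ 1 := by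
      intro hcon
      apply hi2
      simpa [hihdef] using congrArg Subtype.val hcon
    have hh₂ : x⁻¹ * j ∈ H := aux_mul_mem hidx hxinvH hjH
    have h2 : j * i = i⁻¹ * j := by rw [← hjrel]; group
    have h4 : i⁻¹ * j⁻¹ = j⁻¹ * i := by
      have := congrArg (·⁻¹) h2
      simpa [mul_inv_rev] using this
    have h3 : j⁻¹ * i * j = i⁻¹ := by rw [← h4]; group
    have hihker : ih ∈ φ.ker := by
      rw [MonoidHom.mem_ker, hφval]
      show x⁻¹ * i * x * i = 1
      have hc : x⁻¹ * i * x * i = (x⁻¹ * j) * (j⁻¹ * i * j) * (x⁻¹ * j)⁻¹ * i := by group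
      rw [hc, h3]
      have hcm : (x⁻¹ * j) * i⁻¹ = i⁻¹ * (x⁻¹ * j) := hcomm _ _ hh₂ (H.inv_mem hiH)
      rw [hcm]
      group
    have hzle : Subgroup.zpowers ih ≤ φ.ker := Subgroup.zpowers_le.mpr hihker
    have hzcard : Nat.card (Subgroup.zpowers ih) = 4 := by
      rw [Nat.card_zpowers]
      exact aux_orderOf_four hih4 hih2
    have hkereq : Subgroup.zpowers ih = φ.ker :=
      Subgroup.eq_of_le_of_card_ge hzle (by omega)
    -- the subgroup P of the elementary abelian group landing in H
    set P : Subgroup (Multiplicative (ZMod 2 × ZMod 2 × ZMod 2)) := H.comap g with hPdef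
    have hPcard : 4 ≤ Nat.card P := by
      set ψ2 : Multiplicative (ZMod 2 × ZMod 2 × ZMod 2) →* G ⧸ H :=
        (QuotientGroup.mk' H).comp g with hψ2def
      have hker : ψ2.ker = P := by
        ext p
        simp [hψ2def, MonoidHom.mem_ker, hPdef, Subgroup.mem_comap, QuotientGroup.eq_one_iff]
      have hprod := aux_card_ker_mul_card_range ψ2
      rw [hker] at hprod
      have hM8 : Nat.card (Multiplicative (ZMod 2 × ZMod 2 × ZMod 2)) = 8 := by
        simp [Nat.card_eq_fintype_card]
      rw [hM8] at hprod
      have hrdvd : Nat.card ψ2.range ∣ 2 := by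
        have := Subgroup.card_subgroup_dvd_card ψ2.range
        rwa [hQcard] at this
      rcases (Nat.dvd_prime Nat.prime_two).mp hrdvd with h1 | h1 <;> rw [h1] at hprod <;> omega
    -- every nontrivial element of P is mapped to i ^ 2
    have hclaim : ∀ p ∈ P, p ≠ 1 → g p = i ^ 2 := by
      intro p hp hp1
      have hgpH : g p ∈ H := hp
      have hgp2 : g p * g p = 1 := by rw [← map_mul, hw2, map_one]
      have hfix2 : e⁻¹ * g p * e = g p := by
        rw [heinv, hedef, ← map_mul, ← map_mul]
        congr 1
        rw [mul_comm w p, mul_assoc, hw2, mul_one]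
      have hfix : x⁻¹ * g p * x = g p := by
        have hx' : x⁻¹ * g p * x = (x⁻¹ * e) * (e⁻¹ * g p * e) * (x⁻¹ * e)⁻¹ := by group
        rw [hx', hfix2]
        have hcm1 : (x⁻¹ * e) * g p = g p * (x⁻¹ * e) := hcomm _ _ hh₀ hgpH
        rw [hcm1]
        group
      have hker_p : (⟨g p, hgpH⟩ : ↥H) ∈ φ.ker := by
        rw [MonoidHom.mem_ker, hφval]
        show x⁻¹ * g p * x * g p = 1
        rw [hfix]
        exact hgp2
      rw [← hkereq] at hker_p
      rcases aux_zpowers_four hih4 hker_p with h | h | h | h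
      · exfalso
        apply hp1
        apply hg
        rw [map_one]
        simpa [hihdef] using congrArg Subtype.val h
      · exfalso
        apply hi2
        have hgpi : g p = i := by simpa [hihdef] using congrArg Subtype.val h
        rw [pow_two, ← hgpi]
        exact hgp2
      · simpa [hihdef] using congrArg Subtype.val h
      · exfalso
        apply hi2
        have hgpi : g p = i ^ 3 := by simpa [hihdef] using congrArg Subtype.val h
        have h6 : i ^ 3 * i ^ 3 = i ^ 2 := by
          rw [← pow_add, show (3 + 3 : ℕ) = 4 + 2 from rfl, pow_add, hi4, one_mul]
        rw [← h6, ← hgpi]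
        exact hgp2
    -- conclude : P has at most 2 elements, contradiction
    by_cases hex : ∃ p ∈ P, p ≠ 1
    · obtain ⟨p₀, hp₀P, hp₀⟩ := hex
      have hall : ∀ p ∈ P, p = 1 ∨ p = p₀ := by
        intro p hp
        by_cases h1 : p = 1
        · exact Or.inl h1
        · exact Or.inr (hg ((hclaim p hp h1).trans (hclaim p₀ hp₀P hp₀).symm))
      have := aux_card_le_two p₀ hall
      omega
    · push_neg at hex
      have hall : ∀ p ∈ P, p = 1 ∨ p = 1 := fun p hp => Or.inl (hex p hp)
      have := aux_card_le_two 1 hall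
      omega
end

section
/- Every group of order 8 embeds into the direct product C_2 × QD_16, where QD_16 is the quasidihedral group of order 16 given by ⟨x, y | x^2 = y^8 = 1, xyx = y^3⟩. -/
/-- Relators for the quasidihedral group of order 16:
`⟨x, y ∣ x² = y⁸ = 1, x y x = y³⟩`, with `x = of true`, `y = of false`. -/
def qdRels : Set (FreeGroup Bool) :=
  {(FreeGroup.of true) ^ 2, (FreeGroup.of false) ^ 8,
   FreeGroup.of true * FreeGroup.of false * FreeGroup.of true *
     ((FreeGroup.of false) ^ 3)⁻¹}

/-- The quasidihedral group of order 16. -/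
def QD16 : Type := PresentedGroup qdRels

instance : Group QD16 := by unfold QD16; infer_instance

/-! ### Generic lifting lemmas -/

section lifts
variable {G : Type*} [Group G]

lemma zpow_eq_of_cast {n : ℕ} [NeZero n] {g : G} (hg : g ^ (n:ℕ) = 1) {a b : ℤ}
    (h : (a : ZMod n) = (b : ZMod n)) : g ^ a = g ^ b := by
  have hd : (orderOf g : ℤ) ∣ n := Int.natCast_dvd_natCast.mpr (orderOf_dvd_of_pow_eq_one hg)
  have : a ≡ b [ZMOD (n:ℕ)] := (ZMod.intCast_eq_intCast_iff' a b n).mp (by exact_mod_cast h)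
  exact zpow_eq_zpow_iff_modEq.mpr ((Int.ModEq.of_dvd hd this))

/-- Hom from `Multiplicative (ZMod n)` given an element with `g ^ n = 1`. -/
def zmodPow (n : ℕ) [NeZero n] (g : G) (hg : g ^ (n:ℕ) = 1) :
    Multiplicative (ZMod n) →* G where
  toFun i := g ^ ((Multiplicative.toAdd i).val : ℤ)
  map_one' := by simp
  map_mul' a b := by
    show g ^ (((Multiplicative.toAdd (a*b)).val : ℤ)) = _ * _
    have key : ((((Multiplicative.toAdd (a*b)).val : ℤ)) : ZMod n)
        = (((((Multiplicative.toAdd a).val : ℤ) + ((Multiplicative.toAdd b).val : ℤ)) : ℤ) : ZMod n) := by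
      push_cast [ZMod.natCast_val, ZMod.cast_id]
      rfl
    rw [zpow_eq_of_cast hg key, zpow_add]

lemma zmodPow_apply (n : ℕ) [NeZero n] (g : G) (hg : g ^ (n:ℕ) = 1) (i : Multiplicative (ZMod n)) :
    zmodPow n g hg i = g ^ ((Multiplicative.toAdd i).val : ℤ) := rfl

lemma swap_zpow {x y : G} (hxy : x * y * x⁻¹ = y⁻¹) (m : ℤ) :
    y ^ m * x = x * y ^ (-m) := by
  have e1 : x⁻¹ * y⁻¹ * x = y := by rw [← hxy]; group
  have h1 : x⁻¹ * y * x = y⁻¹ := by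
    have := congrArg Inv.inv e1
    simpa [mul_inv_rev, mul_assoc] using this
  have h3 : x⁻¹ * y ^ m * x = y ^ (-m) := by
    have hc : (x⁻¹ * y * x⁻¹⁻¹) ^ m = x⁻¹ * y ^ m * x⁻¹⁻¹ := conj_zpow
    rw [inv_inv] at hc
    calc x⁻¹ * y ^ m * x = (x⁻¹ * y * x) ^ m := hc.symm
      _ = (y⁻¹) ^ m := by rw [h1]
      _ = y ^ (-m) := by rw [inv_zpow, zpow_neg]
  calc y ^ m * x = x * (x⁻¹ * y ^ m * x) := by group
  _ = x * y ^ (-m) := by rw [h3]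

/-- Lift to a group from `DihedralGroup n` given `x`, `y` with
`x ^ 2 = 1`, `y ^ n = 1`, `x * y * x⁻¹ = y⁻¹`. -/
def dihedralLift (n : ℕ) [NeZero n] (x y : G) (hx : x ^ 2 = 1) (hy : y ^ (n:ℕ) = 1)
    (hxy : x * y * x⁻¹ = y⁻¹) : DihedralGroup n →* G where
  toFun := fun g => match g with
    | DihedralGroup.r i => y ^ (i.val : ℤ)
    | DihedralGroup.sr i => x * y ^ (i.val : ℤ)
  map_one' := by
    show y ^ ((0 : ZMod n).val : ℤ) = 1
    simp
  map_mul' := by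
    rintro (i | i) (j | j)
    · show y ^ (((i+j).val : ℤ)) = y ^ (i.val:ℤ) * y ^ (j.val:ℤ)
      rw [← zpow_add]
      exact zpow_eq_of_cast hy (by push_cast [ZMod.natCast_val, ZMod.cast_id]; ring)
    · show x * y ^ (((j-i).val : ℤ)) = y ^ (i.val:ℤ) * (x * y ^ (j.val:ℤ))
      rw [← mul_assoc, swap_zpow hxy, mul_assoc, ← zpow_add]
      congr 1
      exact zpow_eq_of_cast hy (by push_cast [ZMod.natCast_val, ZMod.cast_id]; ring)
    · show x * y ^ (((i+j).val : ℤ)) = (x * y ^ (i.val:ℤ)) * y ^ (j.val:ℤ)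
      rw [mul_assoc, ← zpow_add]
      congr 1
      exact zpow_eq_of_cast hy (by push_cast [ZMod.natCast_val, ZMod.cast_id]; ring)
    · show y ^ (((j-i).val : ℤ)) = (x * y ^ (i.val:ℤ)) * (x * y ^ (j.val:ℤ))
      have hre : (x * y ^ (i.val:ℤ)) * (x * y ^ (j.val:ℤ))
          = x * (y ^ (i.val:ℤ) * x) * y ^ (j.val:ℤ) := by group
      rw [hre, swap_zpow hxy, ← mul_assoc, ← pow_two, hx, one_mul, ← zpow_add]
      exact zpow_eq_of_cast hy (by push_cast [ZMod.natCast_val, ZMod.cast_id]; ring)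

/-- Lift to a group from `QuaternionGroup n` given `x`, `y` with
`x ^ 2 = y ^ n`, `y ^ (2n) = 1`, `x * y * x⁻¹ = y⁻¹`. -/
def quaternionLift (n : ℕ) [NeZero n] (x y : G) (hx : x ^ 2 = y ^ (n:ℤ))
    (hy : y ^ (2*n:ℕ) = 1) (hxy : x * y * x⁻¹ = y⁻¹) : QuaternionGroup n →* G where
  toFun := fun g => match g with
    | QuaternionGroup.a i => y ^ (i.val : ℤ)
    | QuaternionGroup.xa i => x * y ^ (i.val : ℤ)
  map_one' := by
    show y ^ ((0 : ZMod (2*n)).val : ℤ) = 1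
    simp
  map_mul' := by
    rintro (i | i) (j | j)
    · show y ^ (((i+j).val : ℤ)) = y ^ (i.val:ℤ) * y ^ (j.val:ℤ)
      rw [← zpow_add]
      exact zpow_eq_of_cast hy (by push_cast [ZMod.natCast_val, ZMod.cast_id]; ring)
    · show x * y ^ (((j-i).val : ℤ)) = y ^ (i.val:ℤ) * (x * y ^ (j.val:ℤ))
      rw [← mul_assoc, swap_zpow hxy, mul_assoc, ← zpow_add]
      congr 1
      exact zpow_eq_of_cast hy (by push_cast [ZMod.natCast_val, ZMod.cast_id]; ring)
    · show x * y ^ (((i+j).val : ℤ)) = (x * y ^ (i.val:ℤ)) * y ^ (j.val:ℤ)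
      rw [mul_assoc, ← zpow_add]
      congr 1
      exact zpow_eq_of_cast hy (by push_cast [ZMod.natCast_val, ZMod.cast_id]; ring)
    · show y ^ ((((n:ZMod (2*n)) + j - i).val : ℤ)) = (x * y ^ (i.val:ℤ)) * (x * y ^ (j.val:ℤ))
      have hre : (x * y ^ (i.val:ℤ)) * (x * y ^ (j.val:ℤ))
          = x * (y ^ (i.val:ℤ) * x) * y ^ (j.val:ℤ) := by group
      rw [hre, swap_zpow hxy, ← mul_assoc, ← pow_two, hx, ← zpow_add, ← zpow_add]
      exact zpow_eq_of_cast hy (by push_cast [ZMod.natCast_val, ZMod.cast_id]; ring)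

end lifts

/-! ### The concrete permutation model of `QD16` -/

def xPerm : Equiv.Perm (ZMod 8) := ⟨fun k => 3*k, fun k => 3*k, by decide, by decide⟩
def yPerm : Equiv.Perm (ZMod 8) := ⟨fun k => k+1, fun k => k-1, by decide, by decide⟩
def qdF : Bool → Equiv.Perm (ZMod 8) := fun b => if b then xPerm else yPerm

lemma qdF_rel : ∀ r ∈ qdRels, FreeGroup.lift qdF r = 1 := by
  intro r hr
  rcases hr with h | h | h
  · subst h; simp only [map_pow, FreeGroup.lift_apply_of, qdF, if_pos]
    exact Equiv.ext (by decide)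
  · subst h; simp only [map_pow, FreeGroup.lift_apply_of, qdF]
    exact Equiv.ext (by decide)
  · rw [Set.mem_singleton_iff] at h; subst h
    simp only [map_mul, map_inv, map_pow, FreeGroup.lift_apply_of, qdF]
    exact Equiv.ext (by decide)

def qdPhi : QD16 →* Equiv.Perm (ZMod 8) := PresentedGroup.toGroup qdF_rel

namespace QD16facts

def X : QD16 := PresentedGroup.of true
def Y : QD16 := PresentedGroup.of false

lemma qd_rel_one {r : FreeGroup Bool} (hr : r ∈ qdRels) :
    (QuotientGroup.mk r : PresentedGroup qdRels) = 1 :=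
  (QuotientGroup.eq_one_iff r).mpr (Subgroup.subset_normalClosure hr)

lemma hX2 : X ^ 2 = 1 := by
  have := qd_rel_one (r := (FreeGroup.of true)^2) (by left; rfl)
  rwa [QuotientGroup.mk_pow] at this

lemma hY8 : Y ^ (8:ℕ) = 1 := by
  have := qd_rel_one (r := (FreeGroup.of false)^8) (by right; left; rfl)
  rwa [QuotientGroup.mk_pow] at this

lemma hXYX : X * Y * X = Y ^ 3 := by
  have := qd_rel_one (r := FreeGroup.of true * FreeGroup.of false * FreeGroup.of true *
     ((FreeGroup.of false) ^ 3)⁻¹) (by right; right; rfl)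
  rw [QuotientGroup.mk_mul, QuotientGroup.mk_mul, QuotientGroup.mk_inv, QuotientGroup.mk_pow,
    QuotientGroup.mk_mul] at this
  have h := mul_eq_one_iff_eq_inv.mp this
  rwa [inv_inv] at h

lemma hXinv : X⁻¹ = X := by
  have : X * X = 1 := by rw [← pow_two]; exact hX2
  exact inv_eq_of_mul_eq_one_right this |>.symm ▸ (inv_eq_of_mul_eq_one_left this)

lemma hconjm (m : ℤ) : X * Y ^ m * X⁻¹ = Y ^ (3*m) := by
  have base : X * Y * X⁻¹ = Y ^ (3:ℤ) := by
    rw [hXinv]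
    exact_mod_cast hXYX
  calc X * Y ^ m * X⁻¹ = (X * Y * X⁻¹) ^ m := conj_zpow.symm
    _ = (Y ^ (3:ℤ)) ^ m := by rw [base]
    _ = Y ^ (3*m) := by rw [← zpow_mul]

lemma phiX : qdPhi X = xPerm := PresentedGroup.toGroup.of qdF_rel
lemma phiY : qdPhi Y = yPerm := PresentedGroup.toGroup.of qdF_rel

lemma yPerm_pow (m : ℕ) (k : ZMod 8) : (yPerm ^ m) k = k + m := by
  induction m generalizing k with
  | zero => simp
  | succ a ih =>
    rw [pow_succ, Equiv.Perm.mul_apply]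
    show (yPerm ^ a) (k + 1) = _
    rw [ih]
    push_cast
    ring

lemma Ypow_cast_zero {m : ℕ} (h : Y ^ m = 1) : (m : ZMod 8) = 0 := by
  have h1 := congrArg qdPhi h
  rw [map_pow, phiY, map_one] at h1
  have h2 := congrArg (fun e => e 0) h1
  simpa [yPerm_pow] using h2

lemma XYpow_ne_one (m : ℕ) : X * Y ^ m ≠ 1 := by
  intro h
  have h1 := congrArg qdPhi h
  rw [map_mul, map_pow, phiX, phiY, map_one] at h1
  have h2 := congrArg (fun e => e 0) h1
  have h3 := congrArg (fun e => e 1) h1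
  simp only [Equiv.Perm.mul_apply, yPerm_pow] at h2 h3
  have hx0 : ∀ t : ZMod 8, xPerm t = 3 * t := fun _ => rfl
  rw [hx0] at h2 h3
  simp only [Equiv.Perm.coe_one, id_eq] at h2 h3
  have h2' : (3:ZMod 8) * m = 0 := by linear_combination h2
  have hm : (m : ZMod 8) = 0 := by
    calc (m:ZMod 8) = 9*m := by rw [show (9:ZMod 8) = 1 from by decide]; ring
      _ = 3*(3*m) := by ring
      _ = 3*0 := by rw [h2']
      _ = 0 := by ring
  rw [hm] at h3
  norm_num at h3
  exact absurd h3 (by decide)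

end QD16facts

namespace QD16facts

abbrev C2 : Type := Multiplicative (ZMod 2)
abbrev KK : Type := C2 × QD16

def c2gen : C2 := Multiplicative.ofAdd 1

def incl : QD16 →* KK := MonoidHom.prod 1 (MonoidHom.id QD16)

lemma incl_inj : Function.Injective incl := fun a b h => congrArg Prod.snd h

lemma multZMod_eq_one {n : ℕ} {i : Multiplicative (ZMod n)}
    (h : (Multiplicative.toAdd i) = 0) : i = 1 := by
  simpa using congrArg Multiplicative.ofAdd h

lemma Y2zpow (m : ℤ) : (Y ^ (2:ℕ)) ^ m = Y ^ (2*m) := by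
  rw [← zpow_natCast Y 2, ← zpow_mul]
  congr 1

lemma Y4zpow (m : ℤ) : (Y ^ (4:ℕ)) ^ m = Y ^ (4*m) := by
  rw [← zpow_natCast Y 4, ← zpow_mul]
  congr 1

lemma Yzpow_nat_eq_one {a : ℕ} (h : Y ^ (a:ℤ) = 1) : (8:ℕ) ∣ a := by
  rw [zpow_natCast] at h
  have := Ypow_cast_zero h
  rwa [ZMod.natCast_eq_zero_iff] at this

lemma Y2val_eq_one {n : ℕ} [NeZero n] (hn : 2*n ≤ 8) {i : ZMod n}
    (h : Y ^ (2*(i.val:ℤ)) = 1) : i = 0 := by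
  have h' : Y ^ ((2*i.val:ℕ):ℤ) = 1 := by exact_mod_cast h
  have hdvd := Yzpow_nat_eq_one h'
  have hlt : i.val < n := ZMod.val_lt i
  have : i.val = 0 := by omega
  exact (ZMod.val_eq_zero i).mp this

lemma Y4val_eq_one {i : ZMod 2} (h : Y ^ (4*(i.val:ℤ)) = 1) : i = 0 := by
  have h' : Y ^ ((4*i.val:ℕ):ℤ) = 1 := by exact_mod_cast h
  have hdvd := Yzpow_nat_eq_one h'
  have hlt : i.val < 2 := ZMod.val_lt i
  have : i.val = 0 := by omega
  exact (ZMod.val_eq_zero i).mp this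

/-! #### C₈ into QD16 -/

def qdC8 : Multiplicative (ZMod 8) →* QD16 := zmodPow 8 Y hY8

lemma qdC8_inj : Function.Injective qdC8 := by
  rw [injective_iff_map_eq_one]
  intro i hi
  have h1 : Y ^ (((Multiplicative.toAdd i).val : ℕ):ℤ) = 1 := hi
  have := Yzpow_nat_eq_one h1
  have hlt : (Multiplicative.toAdd i).val < 8 := ZMod.val_lt _
  have hv : (Multiplicative.toAdd i).val = 0 := by omega
  exact multZMod_eq_one ((ZMod.val_eq_zero _).mp hv)

/-! #### D₈ into QD16 -/

lemma hY2pow4 : (Y ^ (2:ℕ)) ^ (4:ℕ) = 1 := by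
  rw [← pow_mul]
  exact_mod_cast hY8

lemma hXY2X : X * Y ^ (2:ℕ) * X⁻¹ = (Y ^ (2:ℕ))⁻¹ := by
  have h1 : X * Y ^ ((2:ℤ)) * X⁻¹ = Y ^ (6:ℤ) := by
    have := hconjm 2
    norm_num at this
    exact this
  have h2 : Y ^ (6:ℤ) = Y ^ (-2:ℤ) := zpow_eq_of_cast hY8 (by decide)
  calc X * Y ^ (2:ℕ) * X⁻¹ = X * Y ^ ((2:ℤ)) * X⁻¹ := by
        rw [show ((2:ℤ)) = ((2:ℕ):ℤ) from by norm_num, zpow_natCast]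
    _ = Y ^ (-2:ℤ) := by rw [h1, h2]
    _ = (Y ^ (2:ℕ))⁻¹ := by
        rw [zpow_neg, show ((2:ℤ)) = ((2:ℕ):ℤ) from by norm_num, zpow_natCast]

def qdD8 : DihedralGroup 4 →* QD16 := dihedralLift 4 X (Y ^ (2:ℕ)) hX2 hY2pow4 hXY2X

lemma qdD8_inj : Function.Injective qdD8 := by
  rw [injective_iff_map_eq_one]
  rintro (i | i) hi
  · have h1 : (Y ^ (2:ℕ)) ^ ((i.val:ℕ):ℤ) = 1 := hi
    rw [Y2zpow] at h1
    have := Y2val_eq_one (by norm_num) h1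
    rw [this]
    exact DihedralGroup.one_def.symm
  · exfalso
    have h1 : X * (Y ^ (2:ℕ)) ^ ((i.val:ℕ):ℤ) = 1 := hi
    rw [Y2zpow] at h1
    have h2 : X * Y ^ ((2*i.val:ℕ)) = 1 := by
      exact_mod_cast h1
    exact XYpow_ne_one _ h2

/-! #### Q₈ into QD16 -/

lemma hXYsq : (X*Y) ^ 2 = (Y ^ (2:ℕ)) ^ ((2:ℕ):ℤ) := by
  have h1 : (X*Y)^2 = (X*Y*X)*Y := by rw [pow_two, ← mul_assoc]
  have h2 : (Y ^ (2:ℕ)) ^ ((2:ℕ):ℤ) = Y ^ (4:ℕ) := by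
    rw [zpow_natCast, ← pow_mul]
  rw [h1, hXYX, h2, ← pow_succ]

lemma hXYconj : (X*Y) * (Y ^ (2:ℕ)) * (X*Y)⁻¹ = (Y ^ (2:ℕ))⁻¹ := by
  have h1 : (X*Y) * (Y ^ (2:ℕ)) * (X*Y)⁻¹ = X * Y ^ (2:ℕ) * X⁻¹ := by
    have : (Y:QD16) * Y ^ (2:ℕ) * Y⁻¹ = Y ^ (2:ℕ) := by group
    calc (X*Y) * (Y ^ (2:ℕ)) * (X*Y)⁻¹ = X * (Y * Y ^ (2:ℕ) * Y⁻¹) * X⁻¹ := by group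
      _ = X * Y ^ (2:ℕ) * X⁻¹ := by rw [this]
  rw [h1, hXY2X]

def qdQ8 : QuaternionGroup 2 →* QD16 :=
  quaternionLift 2 (X*Y) (Y ^ (2:ℕ)) hXYsq (by rw [show (2*2:ℕ) = 4 from rfl]; exact hY2pow4)
    hXYconj

lemma qdQ8_inj : Function.Injective qdQ8 := by
  rw [injective_iff_map_eq_one]
  rintro (i | i) hi
  · have h1 : (Y ^ (2:ℕ)) ^ ((i.val:ℕ):ℤ) = 1 := hi
    rw [Y2zpow] at h1
    have := Y2val_eq_one (by norm_num) h1
    rw [this]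
    exact QuaternionGroup.one_def.symm
  · exfalso
    have h1 : (X*Y) * (Y ^ (2:ℕ)) ^ ((i.val:ℕ):ℤ) = 1 := hi
    rw [Y2zpow] at h1
    have h2 : X * Y ^ ((1+2*i.val:ℕ)) = 1 := by
      rw [← h1, mul_assoc]
      congr 1
      rw [← zpow_natCast]
      rw [show ((1+2*i.val:ℕ):ℤ) = 1 + 2*(i.val:ℤ) from by push_cast; ring, zpow_add, zpow_one]
    exact XYpow_ne_one _ h2

end QD16facts

namespace QD16facts

lemma c2gen_sq : c2gen ^ 2 = 1 := by decide

lemma pair1_pow : (((c2gen, (1:QD16))) : KK) ^ (2:ℕ) = 1 := by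
  rw [Prod.pow_mk]
  rw [c2gen_sq, one_pow]
  rfl

lemma pairY2_pow : ((((1:C2), Y^(2:ℕ))) : KK) ^ (4:ℕ) = 1 := by
  rw [Prod.pow_mk, one_pow, ← pow_mul]
  rw [show (2*4:ℕ) = 8 from rfl]
  rw [hY8]
  rfl

lemma pairX_pow : ((((1:C2), X)) : KK) ^ (2:ℕ) = 1 := by
  rw [Prod.pow_mk, one_pow, hX2]
  rfl

lemma pairY4_pow : ((((1:C2), Y^(4:ℕ))) : KK) ^ (2:ℕ) = 1 := by
  rw [Prod.pow_mk, one_pow, ← pow_mul]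
  rw [show (4*2:ℕ) = 8 from rfl]
  rw [hY8]
  rfl

lemma commute_mixed (u : C2) (v : QD16) : Commute ((u,(1:QD16)) : KK) (((1:C2),v) : KK) := by
  show _ * _ = _ * _
  ext <;> simp

lemma commute_XY4 : Commute ((((1:C2), X)) : KK) ((((1:C2), Y^(4:ℕ))) : KK) := by
  have h12 : Y ^ (12:ℤ) = Y ^ (4:ℤ) := zpow_eq_of_cast hY8 (by decide)
  have hc : X * Y ^ (4:ℤ) * X⁻¹ = Y ^ (4:ℤ) := by
    rw [hconjm]
    rw [show (3*4:ℤ) = 12 from by norm_num]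
    exact h12
  have hcomm : X * Y ^ (4:ℕ) = Y ^ (4:ℕ) * X := by
    have := mul_inv_eq_iff_eq_mul.mp hc
    rw [show ((4:ℤ)) = ((4:ℕ):ℤ) from by norm_num, zpow_natCast] at this
    exact this
  show _ * _ = _ * _
  ext
  · simp
  · simpa using hcomm

lemma fst_zpow (p : KK) (m : ℤ) : (p ^ m).1 = p.1 ^ m := rfl
lemma snd_zpow (p : KK) (m : ℤ) : (p ^ m).2 = p.2 ^ m := rfl

/-- `C4 × C2` into `KK`. -/
def kC4C2 : Multiplicative (ZMod 4) × Multiplicative (ZMod 2) →* KK :=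
  MonoidHom.noncommCoprod (zmodPow 4 (((1:C2), Y^(2:ℕ))) pairY2_pow)
    (zmodPow 2 ((c2gen, (1:QD16))) pair1_pow)
    (fun m n => ((commute_mixed c2gen (Y^(2:ℕ))).symm.zpow_zpow _ _))

lemma c2gen_zpow_eq_one : ∀ j : Multiplicative (ZMod 2),
    c2gen ^ (((Multiplicative.toAdd j).val : ℕ):ℤ) = 1 → j = 1 := by decide

lemma kC4C2_inj : Function.Injective kC4C2 := by
  rw [injective_iff_map_eq_one]
  rintro ⟨i, j⟩ h
  have h' : (((1:C2), Y^(2:ℕ)) : KK) ^ (((Multiplicative.toAdd i).val : ℕ):ℤ)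
      * ((c2gen, (1:QD16)) : KK) ^ (((Multiplicative.toAdd j).val : ℕ):ℤ) = 1 := h
  have hfst := congrArg Prod.fst h'
  have hsnd := congrArg Prod.snd h'
  simp only [Prod.fst_mul, Prod.snd_mul, fst_zpow, snd_zpow, Prod.fst_one,
    Prod.snd_one, one_zpow, one_mul, mul_one] at hfst hsnd
  have hj : j = 1 := c2gen_zpow_eq_one j hfst
  rw [Y2zpow] at hsnd
  have hi0 := Y2val_eq_one (n := 4) (by norm_num) hsnd
  have hi : i = 1 := multZMod_eq_one hi0
  rw [hi, hj]
  rfl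

/-- `C2 × C2 × C2` into `KK`. -/
def kC2cube :
    Multiplicative (ZMod 2) × Multiplicative (ZMod 2) × Multiplicative (ZMod 2) →* KK :=
  MonoidHom.noncommCoprod (zmodPow 2 ((c2gen, (1:QD16))) pair1_pow)
    (MonoidHom.noncommCoprod (zmodPow 2 (((1:C2), X)) pairX_pow)
      (zmodPow 2 (((1:C2), Y^(4:ℕ))) pairY4_pow)
      (fun m n => commute_XY4.zpow_zpow _ _))
    (fun m n => Commute.mul_right ((commute_mixed c2gen X).zpow_zpow _ _)
      ((commute_mixed c2gen (Y^(4:ℕ))).zpow_zpow _ _))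

lemma val2_cases : ∀ j : Multiplicative (ZMod 2),
    (Multiplicative.toAdd j).val = 0 ∨ (Multiplicative.toAdd j).val = 1 := by decide

lemma kC2cube_inj : Function.Injective kC2cube := by
  rw [injective_iff_map_eq_one]
  rintro ⟨i, j, k⟩ h
  have h' : ((c2gen, (1:QD16)) : KK) ^ (((Multiplicative.toAdd i).val : ℕ):ℤ)
      * ((((1:C2), X) : KK) ^ (((Multiplicative.toAdd j).val : ℕ):ℤ)
        * (((1:C2), Y^(4:ℕ)) : KK) ^ (((Multiplicative.toAdd k).val : ℕ):ℤ)) = 1 := h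
  have hfst := congrArg Prod.fst h'
  have hsnd := congrArg Prod.snd h'
  simp only [Prod.fst_mul, Prod.snd_mul, fst_zpow, snd_zpow, Prod.fst_one,
    Prod.snd_one, one_zpow, one_mul, mul_one] at hfst hsnd
  have hi : i = 1 := c2gen_zpow_eq_one i hfst
  rw [Y4zpow] at hsnd
  have hk : k = 1 := by
    rcases val2_cases j with hj | hj
    · rw [hj] at hsnd
      simp only [Nat.cast_zero, zpow_zero, one_mul] at hsnd
      exact multZMod_eq_one (Y4val_eq_one hsnd)
    · exfalso
      rw [hj] at hsnd
      simp only [Nat.cast_one, zpow_one] at hsnd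
      have : X * Y ^ ((4*(Multiplicative.toAdd k).val : ℕ)) = 1 := by exact_mod_cast hsnd
      exact XYpow_ne_one _ this
  have hj : j = 1 := by
    rcases val2_cases j with hj | hj
    · exact multZMod_eq_one ((ZMod.val_eq_zero _).mp hj)
    · exfalso
      rw [hj] at hsnd
      simp only [Nat.cast_one, zpow_one] at hsnd
      have : X * Y ^ ((4*(Multiplicative.toAdd k).val : ℕ)) = 1 := by exact_mod_cast hsnd
      exact XYpow_ne_one _ this
  rw [hi, hj, hk]
  rfl

end QD16facts

open QD16facts in
lemma natCard_multZMod (n : ℕ) : Nat.card (Multiplicative (ZMod n)) = n := by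
  rw [Nat.card_congr Multiplicative.toAdd, Nat.card_zmod]

open QD16facts in
/-- Every group of order 8 embeds into `C₂ × QD₁₆`. -/
theorem stmt3 :
    ∀ (H : Type) [Group H] [Finite H], Nat.card H = 8 →
      ∃ f : H →* Multiplicative (ZMod 2) × QD16, Function.Injective f := by
  intro H _ _ hcard
  classical
  have h8 : ∀ g : H, orderOf g ∣ 8 := fun g => hcard ▸ orderOf_dvd_natCard g
  by_cases hc8 : ∃ g : H, orderOf g = 8
  · -- cyclic of order 8
    obtain ⟨g, hg⟩ := hc8
    have hg8 : g ^ (8:ℕ) = 1 := by rw [← hg]; exact pow_orderOf_eq_one g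
    have finj : Function.Injective (zmodPow 8 g hg8) := by
      rw [injective_iff_map_eq_one]
      intro i hi
      have h1' : g ^ (((Multiplicative.toAdd i).val:ℕ):ℤ) = 1 := hi
      have h1 : g ^ (((Multiplicative.toAdd i).val:ℕ)) = 1 := by exact_mod_cast h1' 
      have hd := orderOf_dvd_of_pow_eq_one h1
      rw [hg] at hd
      have hlt : (Multiplicative.toAdd i).val < 8 := ZMod.val_lt _
      have hv : (Multiplicative.toAdd i).val = 0 := by omega
      exact multZMod_eq_one ((ZMod.val_eq_zero _).mp hv)
    have fbij : Function.Bijective (zmodPow 8 g hg8) :=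
      (Nat.bijective_iff_injective_and_card _).mpr ⟨finj, by rw [natCard_multZMod, hcard]⟩
    let e := MulEquiv.ofBijective _ fbij
    exact ⟨(incl.comp qdC8).comp e.symm.toMonoidHom,
      (incl_inj.comp qdC8_inj).comp e.symm.injective⟩
  · push_neg at hc8
    have h4 : ∀ g : H, g ^ (4:ℕ) = 1 := by
      intro g
      have hd := h8 g
      have hne := hc8 g
      rcases (Nat.dvd_prime_pow Nat.prime_two).mp
        (show orderOf g ∣ 2^3 from hd) with ⟨k, hk, he⟩
      have hk2 : k ≤ 2 := by
        by_contra hk3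
        have : k = 3 := by omega
        rw [this] at he
        norm_num at he
        exact hne he
      have : orderOf g ∣ 4 := by
        rw [he, show (4:ℕ) = 2^2 from rfl]
        exact pow_dvd_pow 2 hk2
      exact orderOf_dvd_iff_pow_eq_one.mp this
    by_cases hexp : ∀ g : H, g ^ (2:ℕ) = 1
    · -- elementary abelian (2,2,2)
      have hinv : ∀ x : H, x⁻¹ = x := by
        intro x
        have hx := hexp x
        rw [pow_two] at hx
        exact inv_eq_of_mul_eq_one_left hx
      have hcomm : ∀ a b : H, a * b = b * a := by
        intro a b
        calc a * b = (a*b)⁻¹ := (hinv _).symm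
          _ = b⁻¹ * a⁻¹ := mul_inv_rev a b
          _ = b * a := by rw [hinv, hinv]
      letI : Fintype H := Fintype.ofFinite H
      have hcardF : Fintype.card H = 8 := by rw [← Nat.card_eq_fintype_card, hcard]
      have fresh : ∀ s : Finset H, s.card < 8 → ∃ x, x ∉ s := by
        intro s hs
        have hne : (sᶜ).Nonempty :=
          Finset.card_pos.mp (by rw [Finset.card_compl, hcardF]; omega)
        obtain ⟨x, hx⟩ := hne
        exact ⟨x, Finset.mem_compl.mp hx⟩
      have hnt : Nontrivial H :=
        Finite.one_lt_card_iff_nontrivial.mp (by rw [hcard]; norm_num)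
      obtain ⟨a, ha1⟩ := exists_ne (1 : H)
      obtain ⟨b, hb⟩ := fresh {1, a} (by
        calc ({1, a} : Finset H).card ≤ ({a} : Finset H).card + 1 := Finset.card_insert_le _ _
          _ = 2 := by rw [Finset.card_singleton]
          _ < 8 := by norm_num)
      obtain ⟨c, hc⟩ := fresh {1, a, b, a*b} (by
        calc ({1, a, b, a*b} : Finset H).card
            ≤ ({a, b, a*b} : Finset H).card + 1 := Finset.card_insert_le _ _
          _ ≤ (({b, a*b} : Finset H).card + 1) + 1 := by
              exact Nat.add_le_add_right (Finset.card_insert_le _ _) 1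
          _ ≤ ((({a*b} : Finset H).card + 1) + 1) + 1 := by
              exact Nat.add_le_add_right (Nat.add_le_add_right (Finset.card_insert_le _ _) 1) 1
          _ ≤ 4 := by rw [Finset.card_singleton]
          _ < 8 := by norm_num)
      simp only [Finset.mem_insert, Finset.mem_singleton, not_or] at hb hc
      obtain ⟨hb1, hba⟩ := hb
      obtain ⟨hc1, hca, hcb, hcab⟩ := hc
      set fH := MonoidHom.noncommCoprod (zmodPow 2 a (hexp a))
        (MonoidHom.noncommCoprod (zmodPow 2 b (hexp b)) (zmodPow 2 c (hexp c))
          (fun _ _ => ((show Commute b c from hcomm b c)).zpow_zpow _ _))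
        (fun _ _ => Commute.mul_right ((show Commute a b from hcomm a b).zpow_zpow _ _)
          ((show Commute a c from hcomm a c).zpow_zpow _ _)) with hfH
      have finj : Function.Injective fH := by
        rw [injective_iff_map_eq_one]
        rintro ⟨i, j, k⟩ hh
        have h' : a ^ (((Multiplicative.toAdd i).val:ℕ):ℤ)
            * (b ^ (((Multiplicative.toAdd j).val:ℕ):ℤ)
              * c ^ (((Multiplicative.toAdd k).val:ℕ):ℤ)) = 1 := hh
        have heq1 : ∀ t : Multiplicative (ZMod 2), (Multiplicative.toAdd t).val = 0 → t = 1 :=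
          fun t ht => multZMod_eq_one ((ZMod.val_eq_zero _).mp ht)
        rcases val2_cases i with hi | hi <;> rcases val2_cases j with hj | hj <;>
          rcases val2_cases k with hk | hk <;>
          rw [hi, hj, hk] at h' <;>
          simp only [Nat.cast_zero, Nat.cast_one, zpow_zero, zpow_one, one_mul, mul_one] at h'
        · rw [heq1 i hi, heq1 j hj, heq1 k hk]; rfl
        · exact absurd h' hc1
        · exact absurd h' hb1
        · exfalso
          have : c = b := by
            have := (mul_eq_one_iff_inv_eq.mp h')
            rw [hinv] at this
            exact this.symm
          exact hcb this
        · exact absurd h' ha1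
        · exfalso
          have : c = a := by
            have := (mul_eq_one_iff_inv_eq.mp h')
            rw [hinv] at this
            exact this.symm
          exact hca this
        · exfalso
          have : b = a := by
            have := (mul_eq_one_iff_inv_eq.mp h')
            rw [hinv] at this
            exact this.symm
          exact hba this
        · exfalso
          have h'' : (a * b) * c = 1 := by rw [mul_assoc]; exact h'
          have : c = a * b := by
            have := (mul_eq_one_iff_inv_eq.mp h'')
            rw [hinv] at this
            exact this.symm
          exact hcab this
      have fbij : Function.Bijective fH :=
        (Nat.bijective_iff_injective_and_card _).mpr ⟨finj, by
          simp [Nat.card_prod, natCard_multZMod, hcard, hcardF]⟩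
      let e := MulEquiv.ofBijective _ fbij
      exact ⟨kC2cube.comp e.symm.toMonoidHom, kC2cube_inj.comp e.symm.injective⟩
    · -- there is an element of order 4
      push_neg at hexp
      obtain ⟨z, hz2⟩ := hexp
      have hy4 : orderOf z = 4 := by
        have hdd : orderOf z ∣ 4 := orderOf_dvd_of_pow_eq_one (h4 z)
        have hle := Nat.le_of_dvd (by norm_num) hdd
        have h1or : orderOf z = 1 ∨ orderOf z = 2 ∨ orderOf z = 4 := by
          interval_cases (orderOf z) <;> revert hdd <;> decide
        rcases h1or with h | h | h
        · exfalso
          rw [orderOf_eq_one_iff] at h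
          rw [h] at hz2
          exact hz2 (one_pow 2)
        · exfalso
          have := pow_orderOf_eq_one z
          rw [h] at this
          exact hz2 this
        · exact h
      set y := z with hy
      have hy4pow : y ^ (4:ℕ) = 1 := h4 y
      set N := Subgroup.zpowers y with hN
      have hNcard : Nat.card N = 4 := by rw [hN, Nat.card_zpowers, hy4]
      have hNindex : N.index = 2 := by
        have hh := Subgroup.card_mul_index N
        rw [hNcard, hcard] at hh
        omega
      have hy2ne : y ^ (2:ℕ) ≠ 1 := by
        intro h
        have := orderOf_dvd_of_pow_eq_one h
        rw [hy4] at this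
        omega
      obtain ⟨x, hxN⟩ : ∃ x : H, x ∉ N := by
        by_contra hall
        push_neg at hall
        have htop : N = ⊤ := (Subgroup.eq_top_iff' N).mpr hall
        rw [htop] at hNcard
        rw [Subgroup.card_top, hcard] at hNcard
        omega
      have hyN : y ∈ N := Subgroup.mem_zpowers y
      have hxyNot : x * y ∉ N := by
        rw [Subgroup.mul_mem_iff_of_index_two hNindex]
        simp [hxN, hyN]
      have hconjN : (x * y) * x⁻¹ ∈ N := by
        rw [Subgroup.mul_mem_iff_of_index_two hNindex, Subgroup.inv_mem_iff]
        simp [hxyNot, hxN]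
      obtain ⟨m, hm⟩ := Subgroup.mem_zpowers_iff.mp hconjN
      have hmval : ∀ w : ℤ, ((m : ZMod 4) = ((w:ℤ) : ZMod 4)) → x*y*x⁻¹ = y ^ (w:ℤ) := by
        intro w hw
        rw [← hm]
        exact zpow_eq_of_cast hy4pow hw
      have hvcases : ∀ w : ZMod 4, w = 0 ∨ w = 1 ∨ w = 2 ∨ w = 3 := by decide
      have hx2N : x ^ 2 ∈ N := Subgroup.sq_mem_of_index_two hNindex x
      obtain ⟨s, hs⟩ := Subgroup.mem_zpowers_iff.mp hx2N
      have hsval : ∀ w : ℤ, ((s : ZMod 4) = ((w:ℤ) : ZMod 4)) → x^2 = y ^ (w:ℤ) := by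
        intro w hw
        rw [← hs]
        exact zpow_eq_of_cast hy4pow hw
      have hx2cases : x^2 = 1 ∨ x^2 = y^(2:ℕ) := by
        rcases hvcases (s : ZMod 4) with h|h|h|h
        · left
          have := hsval 0 (by rw [h]; decide)
          simpa using this
        · exfalso
          have hxy : x^2 = y := by
            have := hsval 1 (by rw [h]; decide)
            simpa using this
          have : y^(2:ℕ) = 1 := by
            calc y^(2:ℕ) = (x^2)^2 := by rw [hxy]
              _ = x^(4:ℕ) := by rw [← pow_mul]
              _ = 1 := h4 x
          exact hy2ne this
        · right
          have := hsval 2 (by rw [h]; decide)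
          exact_mod_cast this
        · exfalso
          have hxy : x^2 = y^(3:ℕ) := by
            have := hsval 3 (by rw [h]; decide)
            exact_mod_cast this
          have h6 : y^(6:ℕ) = 1 := by
            calc y^(6:ℕ) = (y^(3:ℕ))^2 := by rw [← pow_mul]
              _ = (x^2)^2 := by rw [hxy]
              _ = x^(4:ℕ) := by rw [← pow_mul]
              _ = 1 := h4 x
          have : y^(2:ℕ) = 1 := by
            calc y^(2:ℕ) = y^(2:ℕ) * y^(4:ℕ) := by rw [hy4pow, mul_one]
              _ = y^(6:ℕ) := by rw [← pow_add]
              _ = 1 := h6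
          exact hy2ne this
      rcases hvcases ((m : ZMod 4)) with hv|hv|hv|hv
      · -- conj = 1, impossible
        exfalso
        have h1 : x*y*x⁻¹ = 1 := by
          have := hmval 0 (by rw [hv]; decide)
          simpa using this
        have : y = 1 := by
          calc y = x⁻¹*(x*y*x⁻¹)*x := by group
            _ = 1 := by rw [h1]; group
        rw [this] at hy4
        simp at hy4
      · -- commuting case: C4 × C2
        have hcommxy : x * y = y * x := by
          have h1 : x*y*x⁻¹ = y := by
            have := hmval 1 (by rw [hv]; decide)
            simpa using this
          exact mul_inv_eq_iff_eq_mul.mp h1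
        obtain ⟨x', hx'N, hx'2, hx'comm⟩ :
            ∃ x' : H, x' ∉ N ∧ x'^(2:ℕ) = 1 ∧ x'*y = y*x' := by
          rcases hx2cases with h0 | h2
          · exact ⟨x, hxN, h0, hcommxy⟩
          · refine ⟨x*y, hxyNot, ?_, ?_⟩
            · have hsq : (x*y)^2 = x^2 * y^2 := by
                have hstep : x*y*(x*y) = x*(y*x)*y := by group
                rw [pow_two, hstep, ← hcommxy, pow_two, pow_two]
                group
              rw [hsq, h2, ← pow_add]
              exact hy4pow
            · show (x*y)*y = y*(x*y)
              rw [show y*(x*y) = (y*x)*y from (mul_assoc y x y).symm, ← hcommxy]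
        set fH := MonoidHom.noncommCoprod (zmodPow 4 y hy4pow) (zmodPow 2 x' hx'2)
          (fun _ _ => ((show Commute y x' from hx'comm.symm)).zpow_zpow _ _) with hfH
        have finj : Function.Injective fH := by
          rw [injective_iff_map_eq_one]
          rintro ⟨i, j⟩ hh
          have h' : y ^ (((Multiplicative.toAdd i).val:ℕ):ℤ)
              * x' ^ (((Multiplicative.toAdd j).val:ℕ):ℤ) = 1 := hh
          rcases val2_cases j with hj | hj <;>
            rw [hj] at h' <;>
            simp only [Nat.cast_zero, Nat.cast_one, zpow_zero, zpow_one, mul_one] at h'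
          · have h1 : y ^ (((Multiplicative.toAdd i).val:ℕ)) = 1 := by exact_mod_cast h'
            have hd := orderOf_dvd_of_pow_eq_one h1
            rw [hy4] at hd
            have hlt : (Multiplicative.toAdd i).val < 4 := ZMod.val_lt _
            have hv0 : (Multiplicative.toAdd i).val = 0 := by omega
            rw [multZMod_eq_one ((ZMod.val_eq_zero _).mp hv0),
              multZMod_eq_one ((ZMod.val_eq_zero _).mp hj)]
            rfl
          · exfalso
            have hx'eq : x' ∈ N := by
              rw [hN, Subgroup.mem_zpowers_iff]
              refine ⟨-(((Multiplicative.toAdd i).val:ℕ):ℤ), ?_⟩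
              rw [zpow_neg]
              exact mul_eq_one_iff_inv_eq.mp h'
            exact hx'N hx'eq
        have fbij : Function.Bijective fH :=
          (Nat.bijective_iff_injective_and_card _).mpr ⟨finj, by
            simp [Nat.card_prod, natCard_multZMod, hcard]⟩
        let e := MulEquiv.ofBijective _ fbij
        exact ⟨kC4C2.comp e.symm.toMonoidHom, kC4C2_inj.comp e.symm.injective⟩
      · -- conj = y², impossible
        exfalso
        have h1 : x*y*x⁻¹ = y^(2:ℕ) := by
          have := hmval 2 (by rw [hv]; decide)
          exact_mod_cast this
        have h2 : x*y^(2:ℕ)*x⁻¹ = 1 := by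
          have hc : (x*y*x⁻¹)^2 = x*y^2*x⁻¹ := conj_pow
          rw [h1] at hc
          rw [← hc, ← pow_mul]
          exact hy4pow
        have : y^(2:ℕ) = 1 := by
          calc y^(2:ℕ) = x⁻¹*(x*y^(2:ℕ)*x⁻¹)*x := by group
            _ = 1 := by rw [h2]; group
        exact hy2ne this
      · -- conj = y⁻¹ : dihedral or quaternion
        have hrel : x * y * x⁻¹ = y⁻¹ := by
          have h1 : x*y*x⁻¹ = y ^ ((3:ℕ):ℤ) := by
            have := hmval 3 (by rw [hv]; decide)
            exact_mod_cast this
          have h2 : y ^ ((3:ℕ):ℤ) = y ^ (-1:ℤ) := zpow_eq_of_cast hy4pow (by decide)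
          rw [h1, h2, zpow_neg_one]
        rcases hx2cases with h0 | h2
        · -- D8
          set fH := dihedralLift 4 x y h0 hy4pow hrel with hfH
          have finj : Function.Injective fH := by
            rw [injective_iff_map_eq_one]
            rintro (i | i) hi
            · have h1' : y ^ ((i.val:ℕ):ℤ) = 1 := hi
              have h1 : y ^ ((i.val:ℕ)) = 1 := by exact_mod_cast h1'
              have hd := orderOf_dvd_of_pow_eq_one h1
              rw [hy4] at hd
              have hlt : i.val < 4 := ZMod.val_lt _
              have hv0 : i.val = 0 := by omega
              rw [(ZMod.val_eq_zero i).mp hv0]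
              exact DihedralGroup.one_def.symm
            · exfalso
              have h' : x * y ^ ((i.val:ℕ):ℤ) = 1 := hi
              have hxmem : x ∈ N := by
                rw [hN, Subgroup.mem_zpowers_iff]
                refine ⟨-((i.val:ℕ):ℤ), ?_⟩
                rw [zpow_neg]
                have := mul_eq_one_iff_eq_inv.mp h'
                rw [this]
              exact hxN hxmem
          have fbij : Function.Bijective fH :=
            (Nat.bijective_iff_injective_and_card _).mpr ⟨finj, by
              rw [DihedralGroup.nat_card, hcard]⟩
          let e := MulEquiv.ofBijective _ fbij
          exact ⟨(incl.comp qdD8).comp e.symm.toMonoidHom,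
            (incl_inj.comp qdD8_inj).comp e.symm.injective⟩
        · -- Q8
          have hxq : x^2 = y^((2:ℕ):ℤ) := by
            rw [h2]
            exact (zpow_natCast y 2).symm
          set fH := quaternionLift 2 x y hxq
            (by rw [show (2*2:ℕ) = 4 from rfl]; exact hy4pow) hrel with hfH
          have finj : Function.Injective fH := by
            rw [injective_iff_map_eq_one]
            rintro (i | i) hi
            · have h1' : y ^ ((i.val:ℕ):ℤ) = 1 := hi
              have h1 : y ^ ((i.val:ℕ)) = 1 := by exact_mod_cast h1'
              have hd := orderOf_dvd_of_pow_eq_one h1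
              rw [hy4] at hd
              have hlt : i.val < 2*2 := ZMod.val_lt _
              have hv0 : i.val = 0 := by omega
              rw [(ZMod.val_eq_zero i).mp hv0]
              exact QuaternionGroup.one_def.symm
            · exfalso
              have h' : x * y ^ ((i.val:ℕ):ℤ) = 1 := hi
              have hxmem : x ∈ N := by
                rw [hN, Subgroup.mem_zpowers_iff]
                refine ⟨-((i.val:ℕ):ℤ), ?_⟩
                rw [zpow_neg]
                have := mul_eq_one_iff_eq_inv.mp h'
                rw [this]
              exact hxN hxmem
          have fbij : Function.Bijective fH :=
            (Nat.bijective_iff_injective_and_card _).mpr ⟨finj, by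
              rw [Nat.card_eq_fintype_card, QuaternionGroup.card, hcard]⟩
          let e := MulEquiv.ofBijective _ fbij
          exact ⟨(incl.comp qdQ8).comp e.symm.toMonoidHom,
            (incl_inj.comp qdQ8_inj).comp e.symm.injective⟩
end

section
/- Every group of order 12 embeds into S_3 × S_4. -/
def permMulEquiv {α β : Type*} (e : α ≃ β) : Equiv.Perm α ≃* Equiv.Perm β where
  toEquiv := e.permCongr
  map_mul' p q := by ext x; simp [Equiv.Perm.mul_apply]

/-- Every group of order 12 embeds into `S₃ × S₄`. -/
theorem stmt5 :
    ∀ (H : Type) [Group H] [Finite H], Nat.card H = 12 →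
      ∃ f : H →* Equiv.Perm (Fin 3) × Equiv.Perm (Fin 4), Function.Injective f := by
  intro H _ _ hcard
  obtain ⟨P⟩ : Nonempty (Sylow 2 H) := inferInstance
  obtain ⟨Q⟩ : Nonempty (Sylow 3 H) := inferInstance
  have hP : Nat.card (P : Subgroup H) = 4 := by
    rw [Sylow.card_eq_multiplicity, hcard]
    have h1 : 2 ≤ (Nat.factorization 12) 2 :=
      (Nat.Prime.pow_dvd_iff_le_factorization Nat.prime_two (by norm_num)).mp (by norm_num)
    have h2 : ¬ 3 ≤ (Nat.factorization 12) 2 := fun h =>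
      absurd ((Nat.Prime.pow_dvd_iff_le_factorization Nat.prime_two (by norm_num)).mpr h)
        (by norm_num)
    have h3 : (Nat.factorization 12) 2 = 2 := by omega
    rw [h3]; norm_num
  have hQ : Nat.card (Q : Subgroup H) = 3 := by
    rw [Sylow.card_eq_multiplicity, hcard]
    have h1 : 1 ≤ (Nat.factorization 12) 3 :=
      (Nat.Prime.pow_dvd_iff_le_factorization Nat.prime_three (by norm_num)).mp (by norm_num)
    have h2 : ¬ 2 ≤ (Nat.factorization 12) 3 := fun h =>
      absurd ((Nat.Prime.pow_dvd_iff_le_factorization Nat.prime_three (by norm_num)).mpr h)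
        (by norm_num)
    have h3 : (Nat.factorization 12) 3 = 1 := by omega
    rw [h3, pow_one]
  have hPQ : Nat.card (H ⧸ (P : Subgroup H)) = 3 := by
    have := Subgroup.card_eq_card_quotient_mul_card_subgroup (P : Subgroup H)
    rw [hcard, hP] at this
    omega
  have hQQ : Nat.card (H ⧸ (Q : Subgroup H)) = 4 := by
    have := Subgroup.card_eq_card_quotient_mul_card_subgroup (Q : Subgroup H)
    rw [hcard, hQ] at this
    omega
  let e3 : (H ⧸ (P : Subgroup H)) ≃ Fin 3 := Finite.equivFinOfCardEq hPQ
  let e4 : (H ⧸ (Q : Subgroup H)) ≃ Fin 4 := Finite.equivFinOfCardEq hQQ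
  let f1 : H →* Equiv.Perm (Fin 3) :=
    (permMulEquiv e3).toMonoidHom.comp (MulAction.toPermHom H (H ⧸ (P : Subgroup H)))
  let f2 : H →* Equiv.Perm (Fin 4) :=
    (permMulEquiv e4).toMonoidHom.comp (MulAction.toPermHom H (H ⧸ (Q : Subgroup H)))
  refine ⟨f1.prod f2, ?_⟩
  rw [← MonoidHom.ker_eq_bot_iff, eq_bot_iff]
  intro x hx
  rw [MonoidHom.mem_ker, Prod.mk.injEq, MonoidHom.prod_apply] at hx
  obtain ⟨h1, h2⟩ := hx
  have hx1 : x ∈ (P : Subgroup H) := by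
    have : x ∈ (MulAction.toPermHom H (H ⧸ (P : Subgroup H))).ker := by
      have : MulAction.toPermHom H (H ⧸ (P : Subgroup H)) x = 1 := by
        have := congrArg (permMulEquiv e3).symm h1
        simpa [f1] using this
      simpa [MonoidHom.mem_ker]
    rw [← Subgroup.normalCore_eq_ker] at this
    exact Subgroup.normalCore_le _ this
  have hx2 : x ∈ (Q : Subgroup H) := by
    have : x ∈ (MulAction.toPermHom H (H ⧸ (Q : Subgroup H))).ker := by
      have : MulAction.toPermHom H (H ⧸ (Q : Subgroup H)) x = 1 := by
        have := congrArg (permMulEquiv e4).symm h2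
        simpa [f2] using this
      simpa [MonoidHom.mem_ker]
    rw [← Subgroup.normalCore_eq_ker] at this
    exact Subgroup.normalCore_le _ this
  -- order of x divides 4 and 3, hence x = 1
  have o1 : orderOf x ∣ 4 := by
    have := orderOf_dvd_natCard (⟨x, hx1⟩ : (P : Subgroup H))
    rw [hP] at this
    simpa [orderOf_submonoid] using this
  have o2 : orderOf x ∣ 3 := by
    have := orderOf_dvd_natCard (⟨x, hx2⟩ : (Q : Subgroup H))
    rw [hQ] at this
    simpa [orderOf_submonoid] using this
  have : orderOf x = 1 := Nat.eq_one_of_dvd_coprimes (by norm_num) o1 o2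
  simpa [Subgroup.mem_bot] using orderOf_eq_one_iff.mp this
end

section
/- Every group of order 12 embeds into C_2 × C_4 × S_4, a group of order 192. In particular, 144 (the minimal order of a group containing all groups of order 12) does not divide 192. -/
def g24 : ZMod 2 →+ ZMod 4 := AddMonoidHom.mk' (fun x => 2 * x.val) (by decide)

lemma g24_inj : Function.Injective g24 := by decide

/-- Any group of order 4 embeds into C2 × C4. -/
lemma lemA (K : Type) [Group K] [Finite K] (hK : Nat.card K = 4) :
    ∃ f : K →* Multiplicative (ZMod 2) × Multiplicative (ZMod 4),
      Function.Injective f := by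
  by_cases hc : ∃ x : K, orderOf x = 4
  · obtain ⟨x, hx⟩ := hc
    have : IsCyclic K := isCyclic_of_orderOf_eq_card x (by rw [hx, hK])
    have e : Multiplicative (ZMod 4) ≃* K := hK ▸ zmodCyclicMulEquiv this
    refine ⟨MonoidHom.prod 1 (e.symm : K →* Multiplicative (ZMod 4)), ?_⟩
    intro a b h
    exact e.symm.injective (congrArg Prod.snd h)
  · have hdvd : ∀ x : K, orderOf x ∣ 2 := by
      intro x
      have h4 : orderOf x ∣ 2 ^ 2 := by
        have := orderOf_dvd_natCard x; rw [hK] at this; exact this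
      obtain ⟨k, hk, hx⟩ := (Nat.dvd_prime_pow Nat.prime_two).mp h4
      interval_cases k
      · simp [hx]
      · simp [hx]
      · exact absurd ⟨x, by rw [hx]; norm_num⟩ hc
    have hd2 : Monoid.exponent K ∣ 2 := Monoid.exponent_dvd.mpr hdvd
    have h2 : Monoid.exponent K = 2 := by
      rcases (Nat.dvd_prime Nat.prime_two).mp hd2 with h1 | h1
      · exfalso
        have hall : ∀ g : K, g = 1 := fun g => by
          have := Monoid.pow_exponent_eq_one g; rwa [h1, pow_one] at this
        have : Subsingleton K := ⟨fun a b => by rw [hall a, hall b]⟩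
        have := Nat.card_of_subsingleton (1 : K)
        omega
      · exact h1
    have hk4 : IsKleinFour K := ⟨hK, h2⟩
    obtain ⟨e⟩ : Nonempty (K ≃* Multiplicative (ZMod 2 × ZMod 2)) :=
      IsKleinFour.nonempty_mulEquiv
    let p : ZMod 2 × ZMod 2 →+ ZMod 2 × ZMod 4 :=
      AddMonoidHom.prodMap (AddMonoidHom.id _) g24
    have hp : Function.Injective p :=
      Prod.map_injective.mpr ⟨Function.injective_id, g24_inj⟩
    let q : Multiplicative (ZMod 2 × ZMod 4) ≃* Multiplicative (ZMod 2) × Multiplicative (ZMod 4) :=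
      MulEquiv.prodMultiplicative _ _
    refine ⟨(q : Multiplicative (ZMod 2 × ZMod 4) →* _).comp
      ((AddMonoidHom.toMultiplicative p).comp (e : K →* _)), ?_⟩
    intro a b h
    apply e.injective
    have h1 : (AddMonoidHom.toMultiplicative p) (e a) = (AddMonoidHom.toMultiplicative p) (e b) :=
      q.injective h
    exact hp h1

lemma fact12_3 : Nat.factorization 12 3 = 1 := by
  rw [show (12:ℕ) = 4*3 by norm_num, Nat.factorization_mul (by norm_num) (by norm_num),
    Finsupp.add_apply,
    Nat.factorization_eq_zero_of_not_dvd (by norm_num), Nat.Prime.factorization (by norm_num)]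
  simp

lemma fact12_2 : Nat.factorization 12 2 = 2 := by
  rw [show (12:ℕ) = 4*3 by norm_num, Nat.factorization_mul (by norm_num) (by norm_num),
    Finsupp.add_apply, show (4:ℕ) = 2^2 by norm_num, Nat.Prime.factorization_pow,
    Nat.factorization_eq_zero_of_not_dvd (by norm_num)]
  · simp
  · exact Nat.prime_two

lemma lemB (H : Type) [Group H] [Finite H] (hH : Nat.card H = 12) :
    ∃ f : H →* Multiplicative (ZMod 2) × Multiplicative (ZMod 4) × Equiv.Perm (Fin 4),
      Function.Injective f := by
  have h3 : Fact (Nat.Prime 3) := ⟨by norm_num⟩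
  have h2 : Fact (Nat.Prime 2) := ⟨Nat.prime_two⟩
  obtain ⟨P⟩ : Nonempty (Sylow 3 H) := inferInstance
  have hP : Nat.card (P : Subgroup H) = 3 := by
    rw [Sylow.card_eq_multiplicity, hH, fact12_3, pow_one]
  have hq4 : Nat.card (H ⧸ (P : Subgroup H)) = 4 := by
    have h1 := Subgroup.card_mul_index (P : Subgroup H)
    have h2 : (P : Subgroup H).index = Nat.card (H ⧸ (P : Subgroup H)) := rfl
    rw [hP, hH, h2] at h1
    omega
  by_cases hcore : ((P : Subgroup H).normalCore = ⊥)
  · -- H embeds into S4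
    have e : (H ⧸ (P : Subgroup H)) ≃ Fin 4 := Finite.equivFinOfCardEq hq4
    let φ : H →* Equiv.Perm (Fin 4) :=
      (Equiv.Perm.viaEmbeddingHom e.toEmbedding).comp
        (MulAction.toPermHom H (H ⧸ (P : Subgroup H)))
    have hφ : Function.Injective φ := by
      refine (Equiv.Perm.viaEmbeddingHom_injective e.toEmbedding).comp ?_
      rw [← MonoidHom.ker_eq_bot_iff, ← Subgroup.normalCore_eq_ker]
      exact hcore
    exact ⟨MonoidHom.prod 1 (MonoidHom.prod 1 φ), fun a b h =>
      hφ (congrArg (fun z => z.2.2) h)⟩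
  · -- P is normal
    have hnc : (P : Subgroup H).normalCore = (P : Subgroup H) := by
      refine Subgroup.eq_of_le_of_card_ge (P : Subgroup H).normalCore_le ?_
      have hdvd : Nat.card (P : Subgroup H).normalCore ∣ 3 := by
        have := Subgroup.card_dvd_of_le (P : Subgroup H).normalCore_le
        rwa [hP] at this
      have hiff : (P : Subgroup H).normalCore = ⊥ ↔
          Nat.card (P : Subgroup H).normalCore = 1 := Subgroup.eq_bot_iff_card _
      have hne : Nat.card (P : Subgroup H).normalCore ≠ 1 := fun h1 => hcore (hiff.mpr h1)
      rcases (Nat.dvd_prime (by norm_num)).mp hdvd with h' | h' <;> omega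
    have hPnormal : (P : Subgroup H).Normal := hnc ▸ Subgroup.normalCore_normal _
    obtain ⟨g, hg⟩ := lemA (H ⧸ (P : Subgroup H)) hq4
    obtain ⟨Q⟩ : Nonempty (Sylow 2 H) := inferInstance
    have hQ : Nat.card (Q : Subgroup H) = 4 := by
      rw [Sylow.card_eq_multiplicity, hH, fact12_2]; norm_num
    have hq3 : Nat.card (H ⧸ (Q : Subgroup H)) = 3 := by
      have h1 := Subgroup.card_mul_index (Q : Subgroup H)
      have h2 : (Q : Subgroup H).index = Nat.card (H ⧸ (Q : Subgroup H)) := rfl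
      rw [hQ, hH, h2] at h1
      omega
    have e3 : (H ⧸ (Q : Subgroup H)) ↪ Fin 4 :=
      (Finite.equivFinOfCardEq hq3).toEmbedding.trans (Fin.castLEEmb (show 3 ≤ 4 by norm_num))
    let ψ : H →* Equiv.Perm (Fin 4) :=
      (Equiv.Perm.viaEmbeddingHom e3).comp (MulAction.toPermHom H (H ⧸ (Q : Subgroup H)))
    let gq : H →* Multiplicative (ZMod 2) × Multiplicative (ZMod 4) :=
      g.comp (QuotientGroup.mk' (P : Subgroup H))
    refine ⟨(MulEquiv.prodAssoc :
        (Multiplicative (ZMod 2) × Multiplicative (ZMod 4)) × Equiv.Perm (Fin 4) ≃*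
          Multiplicative (ZMod 2) × Multiplicative (ZMod 4) × Equiv.Perm (Fin 4)).toMonoidHom.comp
      (MonoidHom.prod gq ψ), ?_⟩
    rw [injective_iff_map_eq_one]
    intro a ha
    have ha' : gq a = 1 ∧ ψ a = 1 := by
      have := (MulEquiv.prodAssoc).injective (ha.trans (map_one _).symm)
      exact ⟨congrArg Prod.fst this, congrArg Prod.snd this⟩
    have haP : a ∈ (P : Subgroup H) := by
      have : QuotientGroup.mk' (P : Subgroup H) a = 1 :=
        hg (ha'.1.trans (map_one g).symm)
      simpa [QuotientGroup.eq_one_iff] using this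
    have haQ : a ∈ (Q : Subgroup H) := by
      have hker : a ∈ (MulAction.toPermHom H (H ⧸ (Q : Subgroup H))).ker := by
        have : MulAction.toPermHom H (H ⧸ (Q : Subgroup H)) a = 1 :=
          Equiv.Perm.viaEmbeddingHom_injective e3 (ha'.2.trans (map_one _).symm)
        exact this
      rw [← Subgroup.normalCore_eq_ker] at hker
      exact (Q : Subgroup H).normalCore_le hker
    have h3' : orderOf a ∣ 3 := hP ▸ Subgroup.orderOf_dvd_natCard _ haP
    have h4' : orderOf a ∣ 4 := hQ ▸ Subgroup.orderOf_dvd_natCard _ haQ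
    have h1 : orderOf a ∣ 1 := by
      have := Nat.dvd_gcd h3' h4'
      simpa using this
    exact orderOf_eq_one_iff.mp (Nat.eq_one_of_dvd_one h1)

/-- Every group of order 12 embeds into `C₂ × C₄ × S₄`, a group of order 192;
moreover 144 does not divide 192. -/
theorem stmt8 :
    (∀ (H : Type) [Group H] [Finite H], Nat.card H = 12 →
      ∃ f : H →* Multiplicative (ZMod 2) × Multiplicative (ZMod 4) × Equiv.Perm (Fin 4),
        Function.Injective f) ∧
    Nat.card (Multiplicative (ZMod 2) × Multiplicative (ZMod 4) × Equiv.Perm (Fin 4))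
      = 192 ∧
    ¬ (144 ∣ 192) := by
  refine ⟨fun H _ _ hH => lemB H hH, ?_, by norm_num⟩
  rw [Nat.card_prod, Nat.card_prod]
  have c2 : Nat.card (Multiplicative (ZMod 2)) = 2 := Nat.card_zmod 2
  have c4 : Nat.card (Multiplicative (ZMod 4)) = 4 := Nat.card_zmod 4
  have cp : Nat.card (Equiv.Perm (Fin 4)) = 24 := by
    rw [Nat.card_eq_fintype_card, Fintype.card_perm, Fintype.card_fin]
    rfl
  rw [c2, c4, cp]
end

section
/- Let A and B be subgroups of a group G such that B centralizes the commutator subgroup [A,B] and [A,B] is abelian. Then the derived subgroup B' centralizes A. -/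
open scoped commutatorElement

/-- If `B` centralizes `[A, B]` and `[A, B]` is abelian, then `B'` centralizes `A`. -/
theorem stmt15 (G : Type*) [Group G] (A B : Subgroup G)
    (h1 : ∀ b ∈ B, ∀ c ∈ ⁅A, B⁆, b * c = c * b)
    (h2 : ∀ c ∈ ⁅A, B⁆, ∀ d ∈ ⁅A, B⁆, c * d = d * c) :
    ∀ b ∈ ⁅B, B⁆, ∀ a ∈ A, b * a = a * b := by
  -- `b ↦ ⁅a, b⁆` is multiplicative
  have key : ∀ a ∈ A, ∀ b₁ ∈ B, ∀ b₂ ∈ B, ⁅a, b₁ * b₂⁆ = ⁅a, b₁⁆ * ⁅a, b₂⁆ := by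
    intro a ha b₁ hb₁ b₂ hb₂
    have hc : ⁅a, b₂⁆ ∈ ⁅A, B⁆ := Subgroup.commutator_mem_commutator ha hb₂
    have h := h1 b₁ hb₁ _ hc
    have : ⁅a, b₁ * b₂⁆ = ⁅a, b₁⁆ * (b₁ * ⁅a, b₂⁆ * b₁⁻¹) := by
      simp only [commutatorElement_def]; group
    rw [this, h]; group
  have keyinv : ∀ a ∈ A, ∀ b ∈ B, ⁅a, b⁻¹⁆ = ⁅a, b⁆⁻¹ := by
    intro a ha b hb
    have hc : ⁅a, b⁆⁻¹ ∈ ⁅A, B⁆ := (⁅A, B⁆).inv_mem (Subgroup.commutator_mem_commutator ha hb)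
    have h := h1 b⁻¹ (B.inv_mem hb) _ hc
    have : ⁅a, b⁻¹⁆ = b⁻¹ * ⁅a, b⁆⁻¹ * b := by
      simp only [commutatorElement_def]; group
    rw [this, h]; group
  have main : ⁅B, B⁆ ≤ Subgroup.centralizer (A : Set G) := by
    rw [Subgroup.commutator_le]
    intro b₁ hb₁ b₂ hb₂
    rw [Subgroup.mem_centralizer_iff]
    intro a ha
    have h1' : ⁅a, b₁⁆ ∈ ⁅A, B⁆ := Subgroup.commutator_mem_commutator ha hb₁
    have h2' : ⁅a, b₂⁆ ∈ ⁅A, B⁆ := Subgroup.commutator_mem_commutator ha hb₂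
    have : ⁅a, ⁅b₁, b₂⁆⁆ = 1 := by
      have e1 : ⁅b₁, b₂⁆ = b₁ * (b₂ * (b₁⁻¹ * b₂⁻¹)) := by
        simp only [commutatorElement_def]; group
      rw [e1,
        key a ha b₁ hb₁ _ (B.mul_mem hb₂ (B.mul_mem (B.inv_mem hb₁) (B.inv_mem hb₂))),
        key a ha b₂ hb₂ _ (B.mul_mem (B.inv_mem hb₁) (B.inv_mem hb₂)),
        key a ha b₁⁻¹ (B.inv_mem hb₁) b₂⁻¹ (B.inv_mem hb₂),
        keyinv a ha b₁ hb₁, keyinv a ha b₂ hb₂]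
      rw [show ⁅a,b₁⁆ * (⁅a,b₂⁆ * (⁅a,b₁⁆⁻¹ * ⁅a,b₂⁆⁻¹)) =
          ⁅a,b₁⁆ * ⁅a,b₂⁆ * ⁅a,b₁⁆⁻¹ * ⁅a,b₂⁆⁻¹ by group,
        h2 _ h1' _ h2']
      group
    have := commutatorElement_eq_one_iff_mul_comm.mp this
    exact this
  intro b hb a ha
  exact (Subgroup.mem_centralizer_iff.mp (main hb) a ha).symm
end

section
/- Let H be a group of order 16 with H = D⟨y⟩ where D ≅ D_8 (dihedral of order 8), y has order 2, D ∩ ⟨y⟩ = 1, and C_H(D) = Z(D). Then H has a unique cyclic subgroup of order 4; in particular the quaternion group Q_8 does not embed into H. -/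
open Subgroup DihedralGroup

private def dgApply (B S : DihedralGroup 4) : DihedralGroup 4 → DihedralGroup 4
  | DihedralGroup.r j => B ^ j.val
  | DihedralGroup.sr j => S * B ^ j.val

set_option maxRecDepth 100000 in
set_option synthInstance.maxSize 2000 in
set_option synthInstance.maxHeartbeats 2000000 in
private lemma dh_decide2 : ∀ gB gS C : DihedralGroup 4, gB ^ 2 ≠ 1 → gS ^ 2 = 1 → gS ≠ gB ^ 2 →
    (¬ ∃ d : DihedralGroup 4, gB = d * r 1 * d⁻¹ ∧ gS = d * sr 0 * d⁻¹) →
    C ^ 2 = 1 → C ≠ 1 → dgApply gB gS C = C →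
    (∀ g, dgApply gB gS (dgApply gB gS g) = C * g * C⁻¹) →
    C = r 1 ^ 2 ∧ gB = r 1 ^ 3 ∧ (gS = sr 0 * r 1 ∨ gS = sr 0 * r 1 ^ 3) := by decide

private lemma normal_of_index_two' {G : Type*} [Group G] {K : Subgroup G} (h : K.index = 2) :
    K.Normal := by
  constructor
  intro n hn g
  rw [Subgroup.mul_mem_iff_of_index_two h, Subgroup.mul_mem_iff_of_index_two h]
  simp [hn]

private lemma isCyclic_zpowers' {G : Type*} [Group G] (g : G) : IsCyclic (zpowers g) := by
  refine ⟨⟨⟨g, mem_zpowers g⟩, ?_⟩⟩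
  rintro ⟨x, hx⟩
  obtain ⟨k, hk⟩ := mem_zpowers_iff.mp hx
  exact mem_zpowers_iff.mpr ⟨k, by apply Subtype.ext; simpa using hk⟩

set_option maxHeartbeats 1000000 in
/-- Let `H` be a group of order 16 with `H = D⟨y⟩`, where `D ≅ D₈` (dihedral of order 8),
`y` has order 2, `D ∩ ⟨y⟩ = 1` and `C_H(D) = Z(D)`.  Then `H` has a unique cyclic
subgroup of order 4; in particular `Q₈` does not embed into `H`. -/
theorem stmt17 (H : Type*) [Group H] (hH : Nat.card H = 16)
    (D : Subgroup H) (y : H)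
    (hD : Nonempty (D ≃* DihedralGroup 4))
    (hy : orderOf y = 2)
    (hgen : D ⊔ Subgroup.zpowers y = ⊤)
    (hint : D ⊓ Subgroup.zpowers y = ⊥)
    (hcent : Subgroup.centralizer (D : Set H) = D ⊓ Subgroup.centralizer (D : Set H)) :
    (∃! C : Subgroup H, IsCyclic C ∧ Nat.card C = 4) ∧
    ¬ ∃ f : QuaternionGroup 2 →* H, Function.Injective f := by
  obtain ⟨e⟩ := hD
  set A : DihedralGroup 4 →* H := D.subtype.comp e.symm.toMonoidHom with hAdef
  have hAinj : Function.Injective A := (Subgroup.subtype_injective D).comp e.symm.injective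
  have hmem : ∀ h : H, h ∈ D ↔ ∃ g, A g = h := by
    intro h
    constructor
    · intro hh
      refine ⟨e ⟨h, hh⟩, ?_⟩
      simp [hAdef]
    · rintro ⟨g, rfl⟩
      exact (e.symm g).2
  set b : H := A (DihedralGroup.r 1) with hbdef
  set a : H := A (DihedralGroup.sr 0) with hadef
  have hbD : b ∈ D := (hmem b).2 ⟨_, rfl⟩
  have haD : a ∈ D := (hmem a).2 ⟨_, rfl⟩
  have hid : ∀ g₁ g₂ : DihedralGroup 4, g₁ = g₂ → A g₁ = A g₂ := fun _ _ h => congrArg A h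
  have hb4 : b ^ 4 = 1 := by
    have h := hid (r 1 ^ 4) 1 (by decide)
    rw [map_pow, map_one] at h
    exact h
  have hb2 : b ^ 2 ≠ 1 := by
    intro h
    have h2 : (r 1 : DihedralGroup 4) ^ 2 = 1 := hAinj (by rw [map_pow, map_one]; exact h)
    exact absurd h2 (by decide)
  have ha2 : a * a = 1 := by
    have h := hid (sr 0 * sr 0) 1 (by decide)
    rw [map_mul, map_one] at h
    exact h
  have hainv : a⁻¹ = a := inv_eq_of_mul_eq_one_right ha2
  have hasq : a ^ 2 = 1 := by rw [pow_two]; exact ha2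
  have haneb2 : a ≠ b ^ 2 := by
    intro h
    have h2 : (sr 0 : DihedralGroup 4) = r 1 ^ 2 := hAinj (by rw [map_pow]; exact h)
    exact absurd h2 (by decide)
  have hba : b * a = a * b ^ 3 := by
    have h := hid (r 1 * sr 0) (sr 0 * r 1 ^ 3) (by decide)
    rw [map_mul, map_mul, map_pow] at h
    exact h
  have hDclass : ∀ h ∈ D, (∃ k : Fin 4, h = b ^ (k : ℕ)) ∨ (∃ k : Fin 4, h = a * b ^ (k : ℕ)) := by
    intro h hh
    obtain ⟨g, rfl⟩ := (hmem h).1 hh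
    have hg := (by decide :
      ∀ g : DihedralGroup 4, (∃ k : Fin 4, g = r 1 ^ (k : ℕ)) ∨
        (∃ k : Fin 4, g = sr 0 * r 1 ^ (k : ℕ))) g
    rcases hg with ⟨k, rfl⟩ | ⟨k, rfl⟩
    · exact Or.inl ⟨k, by rw [map_pow]⟩
    · exact Or.inr ⟨k, by rw [map_mul, map_pow]⟩
  have hDord : ∀ h ∈ D, h ^ 2 = 1 ∨ h = b ∨ h = b ^ 3 := by
    intro h hh
    obtain ⟨g, rfl⟩ := (hmem h).1 hh
    have hg := (by decide : ∀ g : DihedralGroup 4, g ^ 2 = 1 ∨ g = r 1 ∨ g = r 1 ^ 3) g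
    rcases hg with h1 | rfl | rfl
    · exact Or.inl (by rw [← map_pow, h1, map_one])
    · exact Or.inr (Or.inl rfl)
    · exact Or.inr (Or.inr (by rw [map_pow]))
  have hcardD : Nat.card D = 8 := by
    rw [Nat.card_congr e.toEquiv, DihedralGroup.nat_card]
  have hidx : D.index = 2 := by
    have h := Subgroup.card_mul_index D
    rw [hcardD, hH] at h
    omega
  have hDn : D.Normal := normal_of_index_two' hidx
  have hcentD : ∀ x : H, a * x = x * a → b * x = x * b → x ∈ D := by
    intro x hax hbx
    have hx : x ∈ Subgroup.centralizer (D : Set H) := by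
      rw [Subgroup.mem_centralizer_iff]
      intro d hd
      rcases hDclass d hd with ⟨k, rfl⟩ | ⟨k, rfl⟩
      · exact Commute.pow_left hbx k
      · exact Commute.mul_left hax (Commute.pow_left hbx k)
    rw [hcent] at hx
    exact hx.1
  have hordb : orderOf b = 4 := by
    have h := orderOf_eq_prime_pow (x := b) (p := 2) (n := 1) (by exact hb2) (by exact hb4)
    exact h
  have hyD : y ∉ D := by
    intro h
    have h1 : y ∈ D ⊓ zpowers y := ⟨h, mem_zpowers y⟩
    rw [hint, Subgroup.mem_bot] at h1
    rw [h1, orderOf_one] at hy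
    norm_num at hy
  have hyy : y * y = 1 := by
    have h := pow_orderOf_eq_one y
    rw [hy, pow_two] at h
    exact h
  -- main step: no element of order 4 outside D
  have hmain : ∀ x : H, x ∉ D → x ^ 4 = 1 → x ^ 2 = 1 := by
    intro x hxD hx4
    by_contra hx2
    obtain ⟨gB, hgB⟩ := (hmem _).1 (hDn.conj_mem b hbD x)
    obtain ⟨gS, hgS⟩ := (hmem _).1 (hDn.conj_mem a haD x)
    obtain ⟨C, hC⟩ := (hmem _).1 (Subgroup.sq_mem_of_index_two hidx x)
    have hpsi : ∀ g : DihedralGroup 4, x * A g * x⁻¹ = A (dgApply gB gS g) := by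
      intro g
      cases g with
      | r j =>
        have h1 : (r j : DihedralGroup 4) = r 1 ^ j.val := by
          rw [r_one_pow, ZMod.natCast_zmod_val]
        simp only [dgApply, h1, map_pow]
        rw [hgB, conj_pow]
      | sr j =>
        have h1 : (sr j : DihedralGroup 4) = sr 0 * r 1 ^ j.val := by
          rw [r_one_pow, ZMod.natCast_zmod_val, sr_mul_r, zero_add]
        simp only [dgApply, h1, map_mul, map_pow]
        rw [hgB, hgS, conj_pow]
        group
        rfl
    have cB : gB ^ 2 ≠ 1 := by
      intro h
      apply hb2
      have h2 : A (gB ^ 2) = 1 := by rw [h, map_one]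
      rw [map_pow, hgB, conj_pow] at h2
      calc b ^ 2 = x⁻¹ * (x * b ^ 2 * x⁻¹) * x := by group
      _ = 1 := by rw [h2]; group
    have cS : gS ^ 2 = 1 := by
      apply hAinj
      rw [map_pow, hgS, conj_pow, map_one, hasq]
      group
    have cSne : gS ≠ gB ^ 2 := by
      intro h
      apply haneb2
      have h3 := congrArg A h
      rw [hgS, map_pow, hgB, conj_pow] at h3
      calc a = x⁻¹ * (x * a * x⁻¹) * x := by group
      _ = x⁻¹ * (x * b ^ 2 * x⁻¹) * x := by rw [h3]
      _ = b ^ 2 := by group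
    have cInner : ¬ ∃ d : DihedralGroup 4, gB = d * r 1 * d⁻¹ ∧ gS = d * sr 0 * d⁻¹ := by
      rintro ⟨d, hd1, hd2⟩
      apply hxD
      have hkey1 : A d * b * (A d)⁻¹ = x * b * x⁻¹ := by
        rw [← hgB, hd1, map_mul, map_mul, map_inv]
      have hkey2 : A d * a * (A d)⁻¹ = x * a * x⁻¹ := by
        rw [← hgS, hd2, map_mul, map_mul, map_inv]
      have hw : (A d)⁻¹ * x ∈ D := by
        apply hcentD
        · calc a * ((A d)⁻¹ * x) = (A d)⁻¹ * (A d * a * (A d)⁻¹) * x := by group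
          _ = (A d)⁻¹ * (x * a * x⁻¹) * x := by rw [hkey2]
          _ = (A d)⁻¹ * x * a := by group
        · calc b * ((A d)⁻¹ * x) = (A d)⁻¹ * (A d * b * (A d)⁻¹) * x := by group
          _ = (A d)⁻¹ * (x * b * x⁻¹) * x := by rw [hkey1]
          _ = (A d)⁻¹ * x * b := by group
      have hx' : x = A d * ((A d)⁻¹ * x) := by group
      rw [hx']
      exact mul_mem ((hmem _).2 ⟨d, rfl⟩) hw
    have cC2 : C ^ 2 = 1 := by
      apply hAinj
      rw [map_pow, hC, map_one, ← pow_mul]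
      exact hx4
    have cC1 : C ≠ 1 := by
      intro h
      apply hx2
      rw [← hC, h, map_one]
    have cCfix : dgApply gB gS C = C := by
      apply hAinj
      rw [← hpsi, hC]
      group
    have cPsi2 : ∀ g, dgApply gB gS (dgApply gB gS g) = C * g * C⁻¹ := by
      intro g
      apply hAinj
      rw [← hpsi, ← hpsi, map_mul, map_mul, map_inv, hC, pow_two]
      group
    obtain ⟨hCval, hBval, hSval⟩ := dh_decide2 gB gS C cB cS cSne cInner cC2 cC1 cCfix cPsi2
    have hcz : x ^ 2 = b ^ 2 := by rw [← hC, hCval, map_pow]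
    have hxb : x * b * x⁻¹ = b ^ 3 := by rw [← hgB, hBval, map_pow]
    have hxa : x * a * x⁻¹ = a * b ∨ x * a * x⁻¹ = a * b ^ 3 := by
      rcases hSval with h | h
      · left; rw [← hgS, h, map_mul]
      · right; rw [← hgS, h, map_mul, map_pow]
    obtain ⟨t, htdef⟩ : ∃ t : H, t = x * a := ⟨_, rfl⟩
    have ht2 : t ^ 2 = b ∨ t ^ 2 = b ^ 3 := by
      have hsplit : t ^ 2 = (x * a * x⁻¹) * x ^ 2 * a := by rw [htdef, pow_two]; group
      rcases hxa with h | h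
      · left
        rw [hsplit, h, hcz]
        have h2 := hid (sr 0 * r 1 * r 1 ^ 2 * sr 0) (r 1) (by decide)
        rw [map_mul, map_mul, map_mul, map_pow] at h2
        exact h2
      · right
        rw [hsplit, h, hcz]
        have h2 := hid (sr 0 * r 1 ^ 3 * r 1 ^ 2 * sr 0) (r 1 ^ 3) (by decide)
        rw [map_mul, map_mul, map_mul, map_pow, map_pow] at h2
        exact h2
    have ht4 : t ^ 4 = b ^ 2 := by
      have h44 : t ^ 4 = (t ^ 2) ^ 2 := by rw [← pow_mul]
      rcases ht2 with h | h
      · rw [h44, h]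
      · rw [h44, h]
        have h2 := hid ((r 1 ^ 3) ^ 2) (r 1 ^ 2) (by decide)
        rw [map_pow, map_pow, map_pow] at h2
        exact h2
    have ht8 : t ^ 8 = 1 := by
      have h88 : t ^ 8 = (t ^ 4) ^ 2 := by rw [← pow_mul]
      rw [h88, ht4, ← pow_mul]
      exact hb4
    have ht4ne : t ^ 4 ≠ 1 := by rw [ht4]; exact hb2
    have hordt : orderOf t = 8 := by
      have h := orderOf_eq_prime_pow (x := t) (p := 2) (n := 2) (by exact ht4ne) (by exact ht8)
      exact h
    have hxteq : x = t * a := by rw [htdef, mul_assoc, ha2, mul_one]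
    have htD : t ∉ D := by
      intro h
      apply hxD
      rw [hxteq]
      exact mul_mem h haD
    have hcardT : Nat.card (zpowers t) = 8 := by rw [Nat.card_zpowers, hordt]
    have hidxT : (zpowers t).index = 2 := by
      have h := Subgroup.card_mul_index (zpowers t)
      rw [hcardT, hH] at h
      omega
    have hTn : (zpowers t).Normal := normal_of_index_two' hidxT
    have haT : a ∉ zpowers t := by
      intro hmemT
      obtain ⟨k, hk⟩ := mem_zpowers_iff.mp hmemT
      have hcab : Commute a b := by
        have h1 : Commute (t ^ k) (t ^ (2 : ℕ)) := ((Commute.refl t).zpow_left k).pow_right 2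
        rw [hk] at h1
        rcases ht2 with h | h
        · rwa [h] at h1
        · rw [h] at h1
          have h2 := h1.pow_right 3
          have h3 := hid ((r 1 ^ 3) ^ 3) (r 1) (by decide)
          rw [map_pow, map_pow] at h3
          rwa [h3] at h2
      have h4 : a * b = a * b ^ 3 := by rw [hcab.eq, hba]
      have h5 : b = b ^ 3 := mul_left_cancel h4
      apply hb2
      calc b ^ 2 = b * b := by rw [pow_two]
      _ = b * b ^ 3 := by rw [← h5]
      _ = b ^ 4 := by rw [← pow_succ']
      _ = 1 := hb4
    obtain ⟨j, hj⟩ := mem_zpowers_iff.mp (hTn.conj_mem t (mem_zpowers t) a)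
    rw [hainv] at hj
    have hdvd : (8 : ℤ) ∣ j - 3 := by
      have hx2t : x ^ 2 = t * (a * t * a) := by rw [hxteq, pow_two]; group
      rw [← hj] at hx2t
      have h1 : t ^ ((1 : ℤ) + j) = x ^ 2 := by rw [zpow_one_add]; exact hx2t.symm
      have h2 : t ^ ((1 : ℤ) + j) = t ^ ((4 : ℕ) : ℤ) := by
        rw [zpow_natCast]
        calc t ^ ((1 : ℤ) + j) = x ^ 2 := h1
        _ = b ^ 2 := hcz
        _ = t ^ (4 : ℕ) := ht4.symm
      have h3 : t ^ ((1 : ℤ) + j - 4) = 1 := by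
        rw [zpow_sub, h2]
        simp
      have h4 := orderOf_dvd_iff_zpow_eq_one.mpr h3
      rw [hordt] at h4
      omega
    by_cases hyT : y ∈ zpowers t
    · obtain ⟨k, hk⟩ := mem_zpowers_iff.mp hyT
      have hy2 : t ^ (2 * k) = 1 := by
        rw [two_mul, zpow_add, hk]
        exact hyy
      have h8 := orderOf_dvd_iff_zpow_eq_one.mpr hy2
      rw [hordt] at h8
      have hk4 : (4 : ℤ) ∣ k := by omega
      obtain ⟨i, rfl⟩ := hk4
      apply hyD
      rw [← hk]
      have h9 : t ^ ((4 : ℤ) * i) = (t ^ (4 : ℕ)) ^ i := by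
        rw [← zpow_natCast t 4, ← zpow_mul]
        norm_num
      rw [h9, ht4]
      exact Subgroup.zpow_mem D (pow_mem hbD 2) i
    · have hyaT : y * a ∈ zpowers t := by
        rw [Subgroup.mul_mem_iff_of_index_two hidxT]
        simp [hyT, haT]
      obtain ⟨k, hk⟩ := mem_zpowers_iff.mp hyaT
      have hyeq : y = t ^ k * a := by
        rw [hk, mul_assoc, ha2, mul_one]
      have hconjk : a * t ^ k * a = t ^ (j * k) := by
        have h3 : (a * t * a⁻¹) ^ k = a * t ^ k * a⁻¹ := conj_zpow
        rw [hainv] at h3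
        calc a * t ^ k * a = (a * t * a) ^ k := h3.symm
        _ = (t ^ j) ^ k := by rw [hj]
        _ = t ^ (j * k) := by rw [← zpow_mul]
      have hy2' : t ^ (k + j * k) = 1 := by
        have h1 : y * y = 1 := hyy
        rw [hyeq] at h1
        calc t ^ (k + j * k) = t ^ k * t ^ (j * k) := zpow_add t k (j * k)
        _ = t ^ k * (a * t ^ k * a) := by rw [hconjk]
        _ = (t ^ k * a) * (t ^ k * a) := by group
        _ = 1 := h1
      have h8 := orderOf_dvd_iff_zpow_eq_one.mpr hy2'
      rw [hordt] at h8
      obtain ⟨s, hs⟩ := hdvd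
      obtain ⟨u, hu⟩ := h8
      have hlin : k + j * k = 4 * k + 8 * (k * s) := by
        rw [show j = 3 + 8 * s by omega]
        ring
      have h47 : 4 * k + 8 * (k * s) = 8 * u := hlin.symm.trans hu
      have hk2 : (2 : ℤ) ∣ k := ⟨u - k * s, by linarith [h47]⟩
      obtain ⟨i, rfl⟩ := hk2
      apply hyD
      rw [hyeq]
      refine mul_mem ?_ haD
      have h9 : t ^ ((2 : ℤ) * i) = (t ^ (2 : ℕ)) ^ i := by
        rw [← zpow_natCast t 2, ← zpow_mul]
        norm_num
      rw [h9]
      rcases ht2 with h | h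
      · rw [h]; exact Subgroup.zpow_mem D hbD i
      · rw [h]; exact Subgroup.zpow_mem D (pow_mem hbD 3) i
  -- classification of elements of order 4
  have hg2ne : ∀ g : H, orderOf g = 4 → g ^ 2 ≠ 1 := by
    intro g hg h
    have h2 := orderOf_dvd_of_pow_eq_one h
    rw [hg] at h2
    norm_num at h2
  have hno4 : ∀ g : H, orderOf g = 4 → g = b ∨ g = b ^ 3 := by
    intro g hg
    have hg4 : g ^ 4 = 1 := by rw [← hg]; exact pow_orderOf_eq_one g
    by_cases hgD : g ∈ D
    · rcases hDord g hgD with h | h | h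
      · exact absurd h (hg2ne g hg)
      · exact Or.inl h
      · exact Or.inr h
    · exact absurd (hmain g hgD hg4) (hg2ne g hg)
  have hb3inv : b ^ 3 = b⁻¹ := by
    apply eq_inv_of_mul_eq_one_left
    rw [← pow_succ]
    exact hb4
  have huniq : ∀ Csub : Subgroup H, IsCyclic Csub ∧ Nat.card Csub = 4 → Csub = zpowers b := by
    rintro Csub ⟨hCc, hC4⟩
    haveI := hCc
    obtain ⟨g, hg⟩ := IsCyclic.exists_generator (α := Csub)
    have h1 : zpowers g = (⊤ : Subgroup Csub) := by
      rw [Subgroup.eq_top_iff']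
      exact hg
    have hordg : orderOf g = 4 := by
      rw [← Nat.card_zpowers g, h1, Subgroup.card_top, hC4]
    have hordg' : orderOf (g : H) = 4 := by rw [Subgroup.orderOf_coe]; exact hordg
    have hCeq : Csub = zpowers (g : H) := by
      apply le_antisymm
      · intro h hh
        obtain ⟨k, hk⟩ := mem_zpowers_iff.mp (hg ⟨h, hh⟩)
        exact mem_zpowers_iff.mpr ⟨k, by simpa using congrArg Subtype.val hk⟩
      · intro h hh
        obtain ⟨k, hk⟩ := mem_zpowers_iff.mp hh
        rw [← hk]
        exact Subgroup.zpow_mem Csub g.2 k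
    rcases hno4 _ hordg' with h | h
    · rw [hCeq, h]
    · rw [hCeq, h, hb3inv, zpowers_inv]
  have hcard4 : Nat.card (zpowers b) = 4 := by rw [Nat.card_zpowers, hordb]
  constructor
  · exact ⟨zpowers b, ⟨isCyclic_zpowers' b, hcard4⟩, fun Csub hCsub => huniq Csub hCsub⟩
  · rintro ⟨f, hf⟩
    have h1 : orderOf (f (QuaternionGroup.a 1)) = 4 := by
      rw [orderOf_injective f hf, QuaternionGroup.orderOf_a_one]
    have h2 : orderOf (f (QuaternionGroup.xa 0)) = 4 := by
      rw [orderOf_injective f hf, QuaternionGroup.orderOf_xa]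
    have e1 := huniq (zpowers (f (QuaternionGroup.a 1)))
      ⟨isCyclic_zpowers' _, by rw [Nat.card_zpowers, h1]⟩
    have e2 := huniq (zpowers (f (QuaternionGroup.xa 0)))
      ⟨isCyclic_zpowers' _, by rw [Nat.card_zpowers, h2]⟩
    have hmem2 : f (QuaternionGroup.xa 0) ∈ zpowers (f (QuaternionGroup.a 1)) := by
      rw [e1, ← e2]
      exact mem_zpowers _
    obtain ⟨k, hk⟩ := mem_zpowers_iff.mp hmem2
    rw [← map_zpow] at hk
    have hk' := hf hk
    have hpow : ∀ k : ℤ, ∃ i : ZMod (2 * 2),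
        (QuaternionGroup.a 1 : QuaternionGroup 2) ^ k = QuaternionGroup.a i := by
      intro k
      obtain ⟨n, rfl | rfl⟩ := k.eq_nat_or_neg
      · exact ⟨n, by rw [zpow_natCast, QuaternionGroup.a_one_pow]⟩
      · refine ⟨-(n : ZMod (2 * 2)), ?_⟩
        rw [zpow_neg, zpow_natCast, QuaternionGroup.a_one_pow]
        apply inv_eq_of_mul_eq_one_left
        rw [QuaternionGroup.a_mul_a, neg_add_cancel]
        exact QuaternionGroup.one_def.symm
    obtain ⟨i, hi⟩ := hpow k
    rw [hi] at hk'
    exact absurd hk' (by simp)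
end

section
/- Let G be a group of order 32 with G = (D × ⟨x⟩)⟨y⟩ where ⟨x⟩ ⊴ G has order 2, D ≅ D_8, and y^2 ∈ ⟨x⟩. If Q_8 embeds into G, then G has exponent 4; in particular C_8 does not embed into G. -/
open Subgroup Pointwise

lemma zpow_of_sq_one {G : Type*} [Group G] {t : G} (h : t^2 = 1) (k : ℤ) :
    t ^ k = 1 ∨ t ^ k = t := by
  have h2 : t ^ (2:ℤ) = 1 := by rw [show (2:ℤ) = ((2:ℕ):ℤ) by norm_num, zpow_natCast, h]
  have hk : t ^ k = t ^ (k % 2) := by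
    conv_lhs => rw [← Int.emod_add_mul_ediv k 2]
    rw [zpow_add, zpow_mul, h2, one_zpow, mul_one]
  have h01 : k % 2 = 0 ∨ k % 2 = 1 := by omega
  rcases h01 with h01 | h01 <;> rw [hk, h01] <;> simp

lemma card_sup_of_disjoint {G : Type*} [Group G] (A B : Subgroup G) [hB : B.Normal]
    (h : A ⊓ B = ⊥) : Nat.card ↥(A ⊔ B) = Nat.card A * Nat.card B := by
  rw [← Nat.card_prod]
  symm
  apply Nat.card_congr
  refine Equiv.ofBijective (fun p => ⟨(p.1 : G) * (p.2 : G),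
    mul_mem ((le_sup_left : A ≤ A ⊔ B) p.1.2) ((le_sup_right : B ≤ A ⊔ B) p.2.2)⟩) ⟨?_, ?_⟩
  · rintro ⟨⟨a, ha⟩, ⟨b, hb⟩⟩ ⟨⟨a', ha'⟩, ⟨b', hb'⟩⟩ hEq
    simp only [Subtype.mk.injEq] at hEq
    have key : a'⁻¹ * a = b' * b⁻¹ := by
      calc a'⁻¹ * a = a'⁻¹ * (a * b) * b⁻¹ := by group
      _ = a'⁻¹ * (a' * b') * b⁻¹ := by rw [hEq]
      _ = b' * b⁻¹ := by group
    have hmem : a'⁻¹ * a ∈ A ⊓ B :=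
      ⟨A.mul_mem (A.inv_mem ha') ha, key ▸ B.mul_mem hb' (B.inv_mem hb)⟩
    rw [h, Subgroup.mem_bot] at hmem
    have haa : a' = a := inv_mul_eq_one.mp hmem
    have hbb : b = b' := by
      apply mul_left_cancel (a := a)
      rw [hEq, haa]
    simp [haa, hbb]
  · rintro ⟨g, hg⟩
    have hg' : g ∈ ((A : Set G) * (B : Set G)) := by rw [← Subgroup.mul_normal A B]; exact hg
    obtain ⟨a, ha, b, hb, rfl⟩ := hg'
    exact ⟨(⟨a, ha⟩, ⟨b, hb⟩), rfl⟩


lemma conj_of_central {G : Type*} [Group G] {a b wa wb : G}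
    (hwa : ∀ g : G, wa * g = g * wa) (hwb : ∀ g : G, wb * g = g * wb)
    (hwainv : wa⁻¹ = wa)
    (h : (b * wb) * (a * wa) * (b * wb)⁻¹ = (a * wa)⁻¹) : b * a * b⁻¹ = a⁻¹ := by
  have h' : (b * wb) * (a * wa) = (a * wa)⁻¹ * (b * wb) := by
    rw [← h]; group
  have lhs : (b * wb) * (a * wa) = (b * a) * (wb * wa) := by
    rw [mul_assoc b wb _, ← mul_assoc wb a wa, hwb a, mul_assoc a wb wa, ← mul_assoc,
      ← mul_assoc]
  have rhs : (a * wa)⁻¹ * (b * wb) = (a⁻¹ * b) * (wb * wa) := by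
    rw [mul_inv_rev, hwainv, hwa a⁻¹, mul_assoc (a⁻¹) wa _, ← mul_assoc wa b wb, hwa b,
      mul_assoc b wa wb, hwa wb, ← mul_assoc, ← mul_assoc]
  have hba : b * a = a⁻¹ * b := by
    apply mul_right_cancel (b := wb * wa)
    rw [← lhs, ← rhs, h']
  rw [hba]; group

/-- Let `G` be a group of order 32 with `G = (D × ⟨x⟩)⟨y⟩`, where `⟨x⟩ ⊴ G` has
order 2, `D ≅ D₈`, `D ∩ ⟨x⟩ = 1`, `x` commutes with `D`, and `y² ∈ ⟨x⟩`.
If `Q₈` embeds into `G`, then `G` has exponent 4; in particular `C₈` does not embed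
into `G`. -/
theorem stmt18 (G : Type*) [Group G] (hG : Nat.card G = 32)
    (D : Subgroup G) (x y : G)
    (hD : Nonempty (D ≃* DihedralGroup 4))
    (hxnorm : (Subgroup.zpowers x).Normal)
    (hx : orderOf x = 2)
    (hcomm : ∀ d ∈ D, Commute d x)
    (hint : D ⊓ Subgroup.zpowers x = ⊥)
    (hgen : (D ⊔ Subgroup.zpowers x) ⊔ Subgroup.zpowers y = ⊤)
    (hy2 : y ^ 2 ∈ Subgroup.zpowers x)
    (hQ8 : ∃ f : QuaternionGroup 2 →* G, Function.Injective f) :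
    (∀ g : G, g ^ 4 = 1) ∧
    ¬ ∃ f : Multiplicative (ZMod 8) →* G, Function.Injective f := by
  classical
  obtain ⟨e⟩ := hD
  obtain ⟨f, hf⟩ := hQ8
  have hfin : Finite G := Nat.finite_of_card_ne_zero (by rw [hG]; norm_num)
  set X := Subgroup.zpowers x with hX
  have hx2 : x ^ 2 = 1 := by rw [← hx]; exact pow_orderOf_eq_one x
  have hx1 : x ≠ 1 := by
    intro h; rw [h, orderOf_one] at hx; norm_num at hx
  have hXmem : ∀ w ∈ X, w = 1 ∨ w = x := by
    rintro w ⟨k, rfl⟩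
    exact zpow_of_sq_one hx2 k
  -- x is central
  have hcent : ∀ g : G, Commute g x := by
    intro g
    have h1 : g * x * g⁻¹ ∈ X := hxnorm.conj_mem x (mem_zpowers x) g
    rcases hXmem _ h1 with h | h
    · exfalso; apply hx1
      have : g * x * g⁻¹ * g = 1 * g := by rw [h]
      rw [inv_mul_cancel_right, one_mul] at this
      exact mul_left_cancel (a := g) (by rw [this, mul_one])
    · have : g * x * g⁻¹ * g = x * g := by rw [h]
      rwa [inv_mul_cancel_right] at this
  -- cardinalities
  have cardX : Nat.card X = 2 := by rw [hX, Nat.card_zpowers, hx]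
  have cardD : Nat.card D = 8 := by
    rw [Nat.card_congr e.toEquiv, Nat.card_eq_fintype_card, DihedralGroup.card]
  set H := D ⊔ X with hHdef
  have cardH : Nat.card H = 16 := by
    rw [hHdef, card_sup_of_disjoint D X hint, cardD, cardX]
  have indexH : H.index = 2 := by
    have h := H.card_mul_index
    rw [cardH, hG] at h; omega
  have sqH : ∀ g : G, g ^ 2 ∈ H := fun g => Subgroup.sq_mem_of_index_two indexH g
  have mulH : ∀ {a b : G}, a ∉ H → b ∉ H → a * b ∈ H := by
    intro a b ha hb
    rw [Subgroup.mul_mem_iff_of_index_two indexH]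
    exact iff_of_false ha hb
  have hXH : X ≤ H := le_sup_right
  have hDH : D ≤ H := le_sup_left
  -- the central involution z of D
  set zD : D := e.symm (DihedralGroup.r 2) with hzD
  set z : G := (zD : G) with hzdef
  have hez : e zD = DihedralGroup.r 2 := e.apply_symm_apply _
  have hzD1 : ∀ d : D, d = zD ↔ e d = DihedralGroup.r 2 := by
    intro d
    constructor
    · rintro rfl; exact hez
    · intro h; apply e.injective; rw [h, hez]
  have hz1 : z ≠ 1 := by
    intro h
    have h1 : zD = 1 := OneMemClass.coe_eq_one.mp h
    have := congrArg e h1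
    rw [hez, map_one] at this
    exact (by decide : (DihedralGroup.r 2 : DihedralGroup 4) ≠ 1) this
  have hz2 : z ^ 2 = 1 := by
    have h1 : zD ^ 2 = 1 := by
      apply e.injective
      rw [map_pow, hez, map_one]
      decide
    calc z ^ 2 = ((zD ^ 2 : D) : G) := by push_cast; rfl
    _ = 1 := by rw [h1]; rfl
  have hzD' : z ∈ D := zD.2
  have hzx : z ≠ x := by
    intro h
    have : z ∈ D ⊓ X := ⟨hzD', h ▸ mem_zpowers x⟩
    rw [hint, Subgroup.mem_bot] at this
    exact hz1 this
  -- squares of elements of D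
  have hDsq : ∀ d : D, (d : G) ^ 2 = 1 ∨ (d : G) ^ 2 = z := by
    intro d
    rcases (by decide : ∀ w : DihedralGroup 4, w^2 = 1 ∨ w^2 = .r 2) (e d) with h | h
    · left
      have : d ^ 2 = 1 := e.injective (by rw [map_pow, h, map_one])
      calc (d : G) ^ 2 = ((d ^ 2 : D) : G) := by push_cast; ring_nf
      _ = 1 := by rw [this]; rfl
    · right
      have : d ^ 2 = zD := e.injective (by rw [map_pow, h, hez])
      calc (d : G) ^ 2 = ((d ^ 2 : D) : G) := by push_cast; ring_nf
      _ = z := by rw [this]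
  -- squares of elements of H
  have hHsq : ∀ g ∈ H, g ^ 2 = 1 ∨ g ^ 2 = z := by
    intro g hg
    have hg' : g ∈ ((D : Set G) * (X : Set G)) := by
      rw [← Subgroup.mul_normal D X]; exact hg
    obtain ⟨d, hd, w, hw, rfl⟩ := hg'
    have hw1 : w = 1 ∨ w = x := hXmem w hw
    have hcw : Commute d w := by
      rcases hw1 with rfl | rfl
      · exact Commute.one_right d
      · exact hcent d
    have hw2 : w ^ 2 = 1 := by rcases hw1 with rfl | rfl <;> simp [hx2]
    rw [hcw.mul_pow, hw2, mul_one]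
    exact hDsq ⟨d, hd⟩
  have hH4 : ∀ g ∈ H, g ^ 4 = 1 := by
    intro g hg
    rw [show (4:ℕ) = 2 * 2 by norm_num, pow_mul]
    rcases hHsq g hg with h | h
    · rw [h]; simp
    · rw [h, hz2]
  -- f-image facts
  have hfz : f (.a 2) = z := by
    have hne : f (.a 2) ≠ 1 := by
      intro h
      exact (by decide : (QuaternionGroup.a 2 : QuaternionGroup 2) ≠ 1)
        (hf (h.trans (map_one f).symm))
    have hA2 : f (.a 1) ^ 2 = f (.a 2) := by
      rw [← map_pow, show ((QuaternionGroup.a 1 : QuaternionGroup 2)) ^ 2 = .a 2 from by decide]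
    have hB2 : f (.xa 0) ^ 2 = f (.a 2) := by
      rw [← map_pow, show ((QuaternionGroup.xa 0 : QuaternionGroup 2)) ^ 2 = .a 2 from by decide]
    by_cases hA : f (.a 1) ∈ H
    · rcases hHsq _ hA with h | h
      · exact absurd (hA2 ▸ h.symm).symm hne
      · rw [← hA2, h]
    · by_cases hB : f (.xa 0) ∈ H
      · rcases hHsq _ hB with h | h
        · exact absurd (hB2 ▸ h.symm).symm hne
        · rw [← hB2, h]
      · have hAB : f (.a 1) * f (.xa 0) ∈ H := mulH hA hB
        have hAB2 : (f (.a 1) * f (.xa 0)) ^ 2 = f (.a 2) := by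
          rw [← map_mul, ← map_pow,
            show ((QuaternionGroup.a 1 : QuaternionGroup 2) * .xa 0) ^ 2 = .a 2 from by decide]
        rcases hHsq _ hAB with h | h
        · exact absurd (hAB2 ▸ h.symm).symm hne
        · rw [← hAB2, h]
  -- the subgroup K
  set K := f.range ⊔ X with hKdef
  have hrange : ∀ g ∈ f.range, ∃ v, f v = g := fun g hg => hg
  have hrX : f.range ⊓ X = ⊥ := by
    rw [eq_bot_iff]
    rintro g ⟨hg1, hg2⟩
    rw [Subgroup.mem_bot]
    rcases hXmem g hg2 with h | h
    · exact h
    · exfalso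
      obtain ⟨v, hv⟩ := hrange g hg1
      have hvx : f v = x := hv.trans h
      have hv2 : f (v ^ 2) = 1 := by rw [map_pow, hvx, hx2]
      have hvsq : v ^ 2 = 1 := hf (hv2.trans (map_one f).symm)
      rcases (by decide : ∀ v : QuaternionGroup 2, v^2 = 1 → v = 1 ∨ v = .a 2) v hvsq
        with rfl | rfl
      · rw [map_one] at hvx; exact hx1 hvx.symm
      · rw [hfz] at hvx; exact hzx hvx
  have cardR : Nat.card f.range = 8 := by
    have h1 : Nat.card (QuaternionGroup 2) = Nat.card f.range :=
      Nat.card_congr (Equiv.ofInjective f hf)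
    rw [← h1, Nat.card_eq_fintype_card, QuaternionGroup.card]
  have cardK : Nat.card K = 16 := by
    rw [hKdef, card_sup_of_disjoint f.range X hrX, cardR, cardX]
  have indexK : K.index = 2 := by
    have h := K.card_mul_index
    rw [cardK, hG] at h; omega
  have sqK : ∀ g : G, g ^ 2 ∈ K := fun g => Subgroup.sq_mem_of_index_two indexK g
  have hXK : X ≤ K := le_sup_right
  have hK4 : ∀ g ∈ K, g ^ 4 = 1 := by
    intro g hg
    have hg' : g ∈ ((f.range : Set G) * (X : Set G)) := by
      rw [← Subgroup.mul_normal f.range X]; exact hg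
    obtain ⟨q, hq, w, hw, rfl⟩ := hg'
    obtain ⟨v, rfl⟩ := hrange q hq
    have hw1 : w = 1 ∨ w = x := hXmem w hw
    have hcw : Commute (f v) w := by
      rcases hw1 with rfl | rfl
      · exact Commute.one_right _
      · exact hcent _
    have hw4 : w ^ 4 = 1 := by
      rcases hw1 with rfl | rfl
      · simp
      · rw [show (4:ℕ) = 2 * 2 by norm_num, pow_mul, hx2]; simp
    rw [hcw.mul_pow, hw4, mul_one, ← map_pow,
      (by decide : ∀ v : QuaternionGroup 2, v^4 = 1) v, map_one]
  -- H ≠ K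
  have hHK : H ≠ K := by
    intro hEq
    have hD3 : ∀ d1 d2 : D, (d1 : G) ^ 2 = z → (d2 : G) ^ 2 = z →
        (d2 : G) * d1 * (d2 : G)⁻¹ ≠ (d1 : G)⁻¹ := by
      intro d1 d2 h1 h2 hcon
      have h1' : d1 ^ 2 = zD := by
        apply Subtype.ext; push_cast; exact h1
      have h2' : d2 ^ 2 = zD := by
        apply Subtype.ext; push_cast; exact h2
      have hcon' : d2 * d1 * d2⁻¹ = d1⁻¹ := by
        apply Subtype.ext; push_cast; exact hcon
      have e1 : (e d1) ^ 2 = DihedralGroup.r 2 := by rw [← map_pow, h1', hez]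
      have e2 : (e d2) ^ 2 = DihedralGroup.r 2 := by rw [← map_pow, h2', hez]
      have econ : (e d2) * (e d1) * (e d2)⁻¹ = (e d1)⁻¹ := by
        rw [← map_inv, ← map_inv, ← map_mul, ← map_mul, hcon']
      exact (by decide : ∀ w v : DihedralGroup 4, w^2 = .r 2 → v^2 = .r 2 →
        ¬(v*w*v⁻¹ = w⁻¹)) _ _ e1 e2 econ
    -- decompose A and B in H
    have hmemH : ∀ v : QuaternionGroup 2, f v ∈ H := by
      intro v
      rw [hEq]
      exact Subgroup.mem_sup_left ⟨v, rfl⟩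
    have decomp : ∀ v : QuaternionGroup 2, ∃ (d : D) (w : G), w ∈ X ∧ f v = (d : G) * w := by
      intro v
      have hg' : f v ∈ ((D : Set G) * (X : Set G)) := by
        rw [← Subgroup.mul_normal D X]; exact hmemH v
      obtain ⟨d, hd, w, hw, hEq2⟩ := hg'
      exact ⟨⟨d, hd⟩, w, hw, hEq2.symm⟩
    obtain ⟨dA, wA, hwA, hAeq⟩ := decomp (.a 1)
    obtain ⟨dB, wB, hwB, hBeq⟩ := decomp (.xa 0)
    have hwAc : ∀ g : G, Commute g wA := by
      intro g; rcases hXmem _ hwA with rfl | rfl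
      · exact Commute.one_right g
      · exact hcent g
    have hwBc : ∀ g : G, Commute g wB := by
      intro g; rcases hXmem _ hwB with rfl | rfl
      · exact Commute.one_right g
      · exact hcent g
    have hwA2 : wA ^ 2 = 1 := by rcases hXmem _ hwA with rfl | rfl <;> simp [hx2]
    have hwB2 : wB ^ 2 = 1 := by rcases hXmem _ hwB with rfl | rfl <;> simp [hx2]
    have hA2 : f (.a 1) ^ 2 = z := by
      rw [← hfz, ← map_pow, show ((QuaternionGroup.a 1 : QuaternionGroup 2)) ^ 2 = .a 2 from by decide]
    have hB2 : f (.xa 0) ^ 2 = z := by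
      rw [← hfz, ← map_pow, show ((QuaternionGroup.xa 0 : QuaternionGroup 2)) ^ 2 = .a 2 from by decide]
    have hdA2 : (dA : G) ^ 2 = z := by
      rw [hAeq, (hwAc ((dA : G))).mul_pow, hwA2, mul_one] at hA2; exact hA2
    have hdB2 : (dB : G) ^ 2 = z := by
      rw [hBeq, (hwBc ((dB : G))).mul_pow, hwB2, mul_one] at hB2; exact hB2
    have hrel : f (.xa 0) * f (.a 1) * (f (.xa 0))⁻¹ = (f (.a 1))⁻¹ := by
      rw [← map_inv f, ← map_inv f, ← map_mul, ← map_mul,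
        show (QuaternionGroup.xa 0 : QuaternionGroup 2) * .a 1 * (.xa 0)⁻¹ = (.a 1)⁻¹ from by decide]
    apply hD3 dA dB hdA2 hdB2
    have hwAi : wA⁻¹ = wA := by
      rw [inv_eq_iff_mul_eq_one, ← pow_two]; exact hwA2
    apply conj_of_central (fun g => ((hwAc g).symm.eq)) (fun g => ((hwBc g).symm.eq)) hwAi
    rw [← hAeq, ← hBeq]; exact hrel
  -- Part 1 : exponent 4
  have key : ∀ g : G, g ^ 4 = 1 := by
    by_contra hcon
    push_neg at hcon
    obtain ⟨u, hu4⟩ := hcon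
    have hu4z : u ^ 4 = z := by
      rcases hHsq _ (sqH u) with h | h
      · exact absurd (by rw [show (4:ℕ) = 2*2 by norm_num, pow_mul, h]) hu4
      · rw [show (4:ℕ) = 2*2 by norm_num, pow_mul, h]
    have huH : u ∉ H := fun h => hu4 (hH4 u h)
    have huK : u ∉ K := fun h => hu4 (hK4 u h)
    -- the subgroup J = <u²> ⊔ X
    have h22 : (u ^ 2) ^ 2 = z := by rw [← pow_mul]; exact hu4z
    have h24 : (u ^ 2) ^ 4 = 1 := by
      rw [show (4:ℕ) = 2*2 by norm_num, pow_mul, h22, hz2]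
    have hordu2 : orderOf (u ^ 2) = 4 := by
      have hdvd : orderOf (u ^ 2) ∣ 4 := orderOf_dvd_of_pow_eq_one h24
      have hne2 : ¬ orderOf (u ^ 2) ∣ 2 := by
        intro hd
        have h' := orderOf_dvd_iff_pow_eq_one.mp hd
        rw [h22] at h'
        exact hz1 h'
      have hle : orderOf (u ^ 2) ≤ 4 := Nat.le_of_dvd (by norm_num) hdvd
      have hpos : 0 < orderOf (u ^ 2) := orderOf_pos _
      interval_cases h : orderOf (u ^ 2)
      all_goals first | rfl | (exfalso; revert hdvd hne2; decide)
    have hu2H : u ^ 2 ∈ H := sqH u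
    have hu2K : u ^ 2 ∈ K := sqK u
    have hUX : Subgroup.zpowers (u ^ 2) ⊓ X = ⊥ := by
      rw [eq_bot_iff]
      rintro g ⟨hg1, hg2⟩
      rw [Subgroup.mem_bot]
      rcases hXmem g hg2 with h | h
      · exact h
      · exfalso
        obtain ⟨k, hk⟩ := Subgroup.mem_zpowers_iff.mp hg1
        have hxk : (u ^ 2) ^ k = x := hk.trans h
        have h2k : (u ^ 2) ^ (k * 2) = 1 := by
          rw [zpow_mul, hxk, show (2:ℤ) = ((2:ℕ):ℤ) by norm_num, zpow_natCast, hx2]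
        have hdvd2 : ((4:ℕ):ℤ) ∣ k * 2 := by
          rw [← hordu2]
          exact orderOf_dvd_iff_zpow_eq_one.mpr h2k
        obtain ⟨m, hm⟩ : ∃ m : ℤ, k = 2 * m := by
          obtain ⟨c, hc⟩ := hdvd2
          exact ⟨c, by omega⟩
        have hxz : x = z ^ m := by
          rw [← hxk, hm, zpow_mul, show (2:ℤ) = ((2:ℕ):ℤ) by norm_num,
            zpow_natCast, h22]
        rcases zpow_of_sq_one hz2 m with hzm | hzm
        · rw [hzm] at hxz; exact hx1 hxz
        · rw [hzm] at hxz; exact hzx hxz.symm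
    set J := Subgroup.zpowers (u ^ 2) ⊔ X with hJdef
    have cardJ : Nat.card J = 8 := by
      rw [hJdef, card_sup_of_disjoint _ X hUX, Nat.card_zpowers, hordu2, cardX]
    have hJle : J ≤ H ⊓ K := by
      rw [hJdef]
      apply sup_le
      · rw [Subgroup.zpowers_le]
        exact ⟨hu2H, hu2K⟩
      · exact le_inf hXH hXK
    have cardHK : Nat.card (H ⊓ K : Subgroup G) = 8 := by
      have hdvd16 : Nat.card (H ⊓ K : Subgroup G) ∣ 16 := by
        rw [← cardH]; exact Subgroup.card_dvd_of_le inf_le_left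
      have h8 : (8:ℕ) ∣ Nat.card (H ⊓ K : Subgroup G) := by
        rw [← cardJ]; exact Subgroup.card_dvd_of_le hJle
      obtain ⟨m, hm⟩ := h8
      have hm' : 8 * m ∣ 16 := hm ▸ hdvd16
      have hmle : m ≤ 2 := by
        have := Nat.le_of_dvd (by norm_num) hm'
        omega
      have hm0 : m ≠ 0 := by
        intro h0
        rw [h0, mul_zero] at hm
        have := Nat.card_pos (α := (H ⊓ K : Subgroup G))
        omega
      interval_cases m
      · exact absurd rfl hm0
      · rw [hm]
      · exfalso
        have hHKeq : H ⊓ K = H := by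
          apply Subgroup.eq_of_le_of_card_ge inf_le_left
          rw [cardH, hm]
        have hle2 : H ≤ K := inf_eq_left.mp hHKeq
        apply hHK
        exact Subgroup.eq_of_le_of_card_ge hle2 (by rw [cardH, cardK])
    have hJeq : J = H ⊓ K := Subgroup.eq_of_le_of_card_ge hJle (by rw [cardJ, cardHK])
    have hy1 : y ^ 2 = 1 ∨ y ^ 2 = x := hXmem _ hy2
    have hy4 : (y ^ 2) ^ 2 = 1 := by
      rcases hy1 with h | h
      · rw [h]; simp
      · rw [h]; exact hx2
    have hyH : y ∉ H := by
      intro hyH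
      have htop : H = ⊤ := by
        rw [← hgen]
        exact (sup_eq_left.mpr (Subgroup.zpowers_le.mpr hyH)).symm
      have h16 : (16:ℕ) = 32 := by
        rw [← cardH, htop, Subgroup.card_top, hG]
      norm_num at h16
    by_cases hyK : y ∈ K
    · have hy' : y ∈ ((f.range : Set G) * (X : Set G)) := by
        rw [← Subgroup.mul_normal f.range X]; exact hyK
      obtain ⟨q, hq, w, hw, hyeq⟩ := hy'
      obtain ⟨v, rfl⟩ := hrange q hq
      have hwc : ∀ g : G, Commute g w := by
        intro g; rcases hXmem _ hw with h | h <;> rw [h]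
        · exact Commute.one_right g
        · exact hcent g
      have hw2 : w ^ 2 = 1 := by
        rcases hXmem _ hw with h | h <;> rw [h]
        · simp
        · exact hx2
      have hqH : f v ∉ H := by
        intro hh
        apply hyH
        rw [← hyeq]
        exact H.mul_mem hh (hXH hw)
      have hv1 : v ≠ 1 := by
        rintro rfl
        rw [map_one] at hqH; exact hqH H.one_mem
      have hv2 : v ≠ .a 2 := by
        rintro rfl
        rw [hfz] at hqH
        exact hqH (hDH hzD')
      have hvsq : v ^ 2 = QuaternionGroup.a 2 :=
        (by decide : ∀ v : QuaternionGroup 2, v ≠ 1 → v ≠ .a 2 → v^2 = .a 2) v hv1 hv2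
      have hyz : y ^ 2 = z := by
        rw [← hyeq, (hwc (f v)).mul_pow, hw2, mul_one, ← map_pow, hvsq, hfz]
      rcases hy1 with h | h
      · exact hz1 (hyz.symm.trans h)
      · exact hzx (hyz.symm.trans h)
    · have hmemJ : y * u⁻¹ ∈ J := by
        rw [hJeq]
        refine Subgroup.mem_inf.mpr ⟨?_, ?_⟩
        · rw [Subgroup.mul_mem_iff_of_index_two indexH]
          exact iff_of_false hyH (by rwa [inv_mem_iff])
        · rw [Subgroup.mul_mem_iff_of_index_two indexK]
          exact iff_of_false hyK (by rwa [inv_mem_iff])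
      rw [hJdef] at hmemJ
      have hmemJ' : y * u⁻¹ ∈ ((Subgroup.zpowers (u ^ 2) : Set G) * (X : Set G)) := by
        rw [← Subgroup.mul_normal]; exact hmemJ
      obtain ⟨w1, hw1, w2, hw2m, heq⟩ := hmemJ'
      obtain ⟨k, rfl⟩ := Subgroup.mem_zpowers_iff.mp hw1
      replace heq : (u ^ 2) ^ k * w2 = y * u⁻¹ := heq
      have hw2c : ∀ g : G, Commute g w2 := by
        intro g; rcases hXmem _ hw2m with h | h <;> rw [h]
        · exact Commute.one_right g
        · exact hcent g
      have hw22 : w2 ^ 2 = 1 := by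
        rcases hXmem _ hw2m with h | h <;> rw [h]
        · simp
        · exact hx2
      have hcu : Commute ((u ^ 2) ^ k) u := ((Commute.refl u).pow_left 2).zpow_left k
      have hyu : y = (u ^ 2) ^ k * w2 * u := by
        rw [heq]
        group
      have hysq : y ^ 2 = ((u ^ 2) ^ k) ^ 2 * u ^ 2 := by
        rw [hyu]
        have c1 : Commute ((u ^ 2) ^ k * w2) u := hcu.mul_left (hw2c u).symm
        calc ((u ^ 2) ^ k * w2 * u) ^ 2 = ((u ^ 2) ^ k * w2) ^ 2 * u ^ 2 := c1.mul_pow 2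
        _ = ((u ^ 2) ^ k) ^ 2 * w2 ^ 2 * u ^ 2 := by rw [(hw2c ((u ^ 2) ^ k)).mul_pow]
        _ = ((u ^ 2) ^ k) ^ 2 * u ^ 2 := by rw [hw22, mul_one]
      have hy4' : (y ^ 2) ^ 2 = z := by
        rw [hysq, (hcu.pow_pow 2 2).mul_pow]
        have hw14 : (((u ^ 2) ^ k) ^ 2) ^ 2 = 1 := by
          rw [← pow_mul, show (2*2 : ℕ) = 4 by norm_num,
            ← zpow_natCast ((u ^ 2) ^ k) 4, ← zpow_mul, mul_comm,
            zpow_mul, show ((4:ℕ):ℤ) = ((4:ℕ):ℤ) from rfl, zpow_natCast, h24, one_zpow]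
        rw [hw14, one_mul, h22]
      rw [hy4] at hy4'
      exact hz1 hy4'.symm
  refine ⟨key, ?_⟩
  rintro ⟨f8, hf8⟩
  have h4 : f8 (Multiplicative.ofAdd (1 : ZMod 8)) ^ 4 = 1 := key _
  rw [← map_pow] at h4
  have h5 := hf8 (h4.trans (map_one f8).symm)
  exact (by decide : (Multiplicative.ofAdd (1:ZMod 8))^4 ≠ 1) h5
end

section
/- Let G be a finite group such that 3^3 exactly divides |G|, and suppose G has a subgroup H such that 3 divides |Z(H)| and H/Z(H) contains a subgroup isomorphic to A_6. Then the cyclic group C_9 does not embed into G. -/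
open Pointwise Equiv


-- L1: no element of order 9 in Perm (Fin 6)
private lemma permFin6_pow_nine {σ : Equiv.Perm (Fin 6)} (h9 : σ ^ 9 = 1) : σ ^ 3 = 1 := by
  have hdvd : orderOf σ ∣ 9 := orderOf_dvd_of_pow_eq_one h9
  rw [← orderOf_dvd_iff_pow_eq_one, ← Equiv.Perm.lcm_cycleType]
  apply Multiset.lcm_dvd.2
  intro n hn
  have h1 : n ∣ 9 := (Equiv.Perm.dvd_of_mem_cycleType hn).trans hdvd
  have h2 : n ≤ 6 := by
    have := Multiset.single_le_sum (fun a _ => Nat.zero_le a) n hn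
    rw [Equiv.Perm.sum_cycleType] at this
    exact this.trans ((Finset.card_le_univ _).trans_eq (by simp))
  interval_cases n <;> revert h1 <;> decide



private lemma permFin6_real {σ : Equiv.Perm (Fin 6)} (h3 : σ ^ 3 = 1) :
    ∃ τ : Equiv.Perm (Fin 6), Equiv.Perm.sign τ = 1 ∧ τ * σ * τ⁻¹ = σ⁻¹ := by
  have hσ3 : ∀ x, σ (σ (σ x)) = x := by
    intro x
    have : (σ ^ 3) x = x := by rw [h3]; rfl
    simpa [pow_succ, Equiv.Perm.mul_apply] using this
  have hinv : σ⁻¹ = σ * σ := by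
    apply inv_eq_of_mul_eq_one_right
    have h := h3
    rw [pow_succ, pow_succ, pow_one, mul_assoc] at h
    exact h
  by_cases h1 : σ = 1
  · exact ⟨1, by simp, by simp [h1]⟩
  obtain ⟨a, ha⟩ : ∃ a, σ a ≠ a := by
    by_contra hc
    push_neg at hc
    exact h1 (Equiv.ext hc)
  have d21 : σ a ≠ a := ha
  have d31 : σ (σ a) ≠ a := by
    intro h
    have := congrArg σ h
    rw [hσ3] at this
    exact ha this.symm
  have d32 : σ (σ a) ≠ σ a := fun h => ha (σ.injective h)
  have horb : ∀ x : Fin 6, (x = a ∨ x = σ a ∨ x = σ (σ a)) →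
      (σ x = a ∨ σ x = σ a ∨ σ x = σ (σ a)) := by
    rintro x (rfl | rfl | rfl)
    · exact Or.inr (Or.inl rfl)
    · exact Or.inr (Or.inr rfl)
    · exact Or.inl (hσ3 a)
  have hnotorb : ∀ x : Fin 6, ¬(x = a ∨ x = σ a ∨ x = σ (σ a)) →
      ¬(σ x = a ∨ σ x = σ a ∨ σ x = σ (σ a)) := by
    intro x hx hsx
    apply hx
    have h2 := horb _ (horb _ hsx)
    rwa [hσ3] at h2
  by_cases hb : ∀ x : Fin 6, (x = a ∨ x = σ a ∨ x = σ (σ a)) ∨ σ x = x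
  · -- three fixed points
    have hfix : ∀ x : Fin 6, ¬(x = a ∨ x = σ a ∨ x = σ (σ a)) → σ x = x :=
      fun x hx => (hb x).resolve_left hx
    have hcard : ({a, σ a, σ (σ a)} : Finset (Fin 6)).card = 3 := by
      rw [Finset.card_insert_of_notMem (by simp [Ne.symm d21, Ne.symm d31]),
        Finset.card_insert_of_notMem (by simp [Ne.symm d32]), Finset.card_singleton]
    have hCcard : 1 < (({a, σ a, σ (σ a)} : Finset (Fin 6))ᶜ).card := by
      rw [Finset.card_compl, hcard]
      simp
    obtain ⟨c, hc, d, hd, hcd⟩ := Finset.one_lt_card.1 hCcard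
    rw [Finset.mem_compl, Finset.mem_insert, Finset.mem_insert, Finset.mem_singleton] at hc hd
    have hfc : σ c = c := hfix c hc
    have hfd : σ d = d := hfix d hd
    push_neg at hc hd
    obtain ⟨hc1, hc2, hc3⟩ := hc
    obtain ⟨hd1, hd2, hd3⟩ := hd
    refine ⟨swap (σ a) (σ (σ a)) * swap c d, ?_, ?_⟩
    · rw [map_mul, Equiv.Perm.sign_swap (Ne.symm d32), Equiv.Perm.sign_swap hcd]
      norm_num
    · rw [hinv, mul_inv_eq_iff_eq_mul]
      apply Equiv.ext
      intro x
      simp only [Equiv.Perm.mul_apply]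
      by_cases hxo : x = a ∨ x = σ a ∨ x = σ (σ a)
      · rcases hxo with rfl | rfl | rfl
        · rw [swap_apply_of_ne_of_ne (Ne.symm hc2) (Ne.symm hd2), swap_apply_left,
            swap_apply_of_ne_of_ne (Ne.symm hc1) (Ne.symm hd1),
            swap_apply_of_ne_of_ne (Ne.symm d21) (Ne.symm d31)]
        · rw [swap_apply_of_ne_of_ne (Ne.symm hc3) (Ne.symm hd3), swap_apply_right,
            swap_apply_of_ne_of_ne (Ne.symm hc2) (Ne.symm hd2), swap_apply_left, hσ3]
        · rw [hσ3, swap_apply_of_ne_of_ne (Ne.symm hc1) (Ne.symm hd1),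
            swap_apply_of_ne_of_ne (Ne.symm d21) (Ne.symm d31),
            swap_apply_of_ne_of_ne (Ne.symm hc3) (Ne.symm hd3), swap_apply_right, hσ3]
      · rw [hfix x hxo]
        by_cases hxc : x = c
        · subst hxc
          rw [swap_apply_left, swap_apply_of_ne_of_ne hd2 hd3, hfd, hfd]
        by_cases hxd : x = d
        · subst hxd
          rw [swap_apply_right, swap_apply_of_ne_of_ne hc2 hc3, hfc, hfc]
        have hx := hxo
        push_neg at hx
        obtain ⟨hx1, hx2, hx3⟩ := hx
        rw [swap_apply_of_ne_of_ne hxc hxd, swap_apply_of_ne_of_ne hx2 hx3,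
          hfix x hxo, hfix x hxo]
  · -- a second 3-orbit
    push_neg at hb
    obtain ⟨b, ⟨nb1, nb2, nb3⟩, hbm⟩ := hb
    have hbo : ¬(b = a ∨ b = σ a ∨ b = σ (σ a)) := by push_neg; exact ⟨nb1, nb2, nb3⟩
    have e21 : σ b ≠ b := hbm
    have e31 : σ (σ b) ≠ b := by
      intro h
      have := congrArg σ h
      rw [hσ3] at this
      exact hbm this.symm
    have e32 : σ (σ b) ≠ σ b := fun h => hbm (σ.injective h)
    have hσbo := hnotorb b hbo
    have hσσbo := hnotorb (σ b) hσbo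
    push_neg at hσbo hσσbo
    obtain ⟨ns1, ns2, ns3⟩ := hσbo
    obtain ⟨nt1, nt2, nt3⟩ := hσσbo
    have hcard : ({a, σ a, σ (σ a), b, σ b, σ (σ b)} : Finset (Fin 6)).card = 6 := by
      rw [Finset.card_insert_of_notMem (by
          simp only [Finset.mem_insert, Finset.mem_singleton]
          push_neg
          exact ⟨Ne.symm d21, Ne.symm d31, Ne.symm nb1, Ne.symm ns1, Ne.symm nt1⟩),
        Finset.card_insert_of_notMem (by
          simp only [Finset.mem_insert, Finset.mem_singleton]
          push_neg
          exact ⟨Ne.symm d32, Ne.symm nb2, Ne.symm ns2, Ne.symm nt2⟩),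
        Finset.card_insert_of_notMem (by
          simp only [Finset.mem_insert, Finset.mem_singleton]
          push_neg
          exact ⟨Ne.symm nb3, Ne.symm ns3, Ne.symm nt3⟩),
        Finset.card_insert_of_notMem (by
          simp only [Finset.mem_insert, Finset.mem_singleton]
          push_neg
          exact ⟨Ne.symm e21, Ne.symm e31⟩),
        Finset.card_insert_of_notMem (by simp [Ne.symm e32]), Finset.card_singleton]
    have hall : ∀ x : Fin 6, x = a ∨ x = σ a ∨ x = σ (σ a) ∨ x = b ∨ x = σ b ∨ x = σ (σ b) := by
      intro x
      have huniv : ({a, σ a, σ (σ a), b, σ b, σ (σ b)} : Finset (Fin 6)) = Finset.univ :=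
        Finset.eq_univ_of_card _ (by rw [hcard]; simp)
      have hx : x ∈ ({a, σ a, σ (σ a), b, σ b, σ (σ b)} : Finset (Fin 6)) := by
        rw [huniv]; exact Finset.mem_univ x
      simpa [Finset.mem_insert] using hx
    refine ⟨swap (σ a) (σ (σ a)) * swap (σ b) (σ (σ b)), ?_, ?_⟩
    · rw [map_mul, Equiv.Perm.sign_swap (Ne.symm d32), Equiv.Perm.sign_swap (Ne.symm e32)]
      norm_num
    · rw [hinv, mul_inv_eq_iff_eq_mul]
      apply Equiv.ext
      intro x
      simp only [Equiv.Perm.mul_apply]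
      rcases hall x with rfl | rfl | rfl | rfl | rfl | rfl
      · rw [swap_apply_of_ne_of_ne (Ne.symm ns2) (Ne.symm nt2), swap_apply_left,
          swap_apply_of_ne_of_ne (Ne.symm ns1) (Ne.symm nt1),
          swap_apply_of_ne_of_ne (Ne.symm d21) (Ne.symm d31)]
      · rw [swap_apply_of_ne_of_ne (Ne.symm ns3) (Ne.symm nt3), swap_apply_right,
          swap_apply_of_ne_of_ne (Ne.symm ns2) (Ne.symm nt2), swap_apply_left, hσ3]
      · rw [hσ3, swap_apply_of_ne_of_ne (Ne.symm ns1) (Ne.symm nt1),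
          swap_apply_of_ne_of_ne (Ne.symm d21) (Ne.symm d31),
          swap_apply_of_ne_of_ne (Ne.symm ns3) (Ne.symm nt3), swap_apply_right, hσ3]
      · rw [swap_apply_left, swap_apply_of_ne_of_ne nt2 nt3,
          swap_apply_of_ne_of_ne (Ne.symm e21) (Ne.symm e31),
          swap_apply_of_ne_of_ne nb2 nb3]
      · rw [swap_apply_right, swap_apply_of_ne_of_ne ns2 ns3, swap_apply_left,
          swap_apply_of_ne_of_ne nt2 nt3, hσ3]
      · rw [hσ3, swap_apply_of_ne_of_ne (Ne.symm e21) (Ne.symm e31),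
          swap_apply_of_ne_of_ne nb2 nb3, swap_apply_right,
          swap_apply_of_ne_of_ne ns2 ns3, hσ3]


private lemma conjInto {Γ : Type*} [Group Γ] [Finite Γ] {p : ℕ} [Fact p.Prime]
    (K : Subgroup Γ) (hK : (Nat.card Γ).factorization p ≤ (Nat.card K).factorization p)
    {u : Γ} {k : ℕ} (hu : u ^ p ^ k = 1) : ∃ c : Γ, c * u * c⁻¹ ∈ K := by
  obtain ⟨SK⟩ : Nonempty (Sylow p K) := inferInstance
  have hP2 : IsPGroup p ((SK : Subgroup K).map K.subtype) := SK.isPGroup'.map _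
  obtain ⟨R2, hR2⟩ := hP2.exists_le_sylow
  have hcardP2 : Nat.card ((SK : Subgroup K).map K.subtype) =
      p ^ (Nat.card K).factorization p := by
    rw [← SK.card_eq_multiplicity]
    exact (Nat.card_congr
      ((SK : Subgroup K).equivMapOfInjective K.subtype K.subtype_injective).toEquiv).symm
  have hP2R2 : (SK : Subgroup K).map K.subtype = (R2 : Subgroup Γ) := by
    apply Subgroup.eq_of_le_of_card_ge hR2
    rw [R2.card_eq_multiplicity, hcardP2]
    exact Nat.pow_le_pow_right (Fact.out : p.Prime).pos hK
  have hu2 : IsPGroup p (Subgroup.zpowers u) := by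
    obtain ⟨m, -, hm⟩ := (Nat.dvd_prime_pow (Fact.out : p.Prime)).1 (orderOf_dvd_of_pow_eq_one hu)
    exact IsPGroup.of_card (by rw [Nat.card_zpowers, hm])
  obtain ⟨R3, hR3⟩ := hu2.exists_le_sylow
  obtain ⟨c, hc⟩ := MulAction.exists_smul_eq Γ R3 R2
  refine ⟨c, ?_⟩
  have hmem : c * u * c⁻¹ ∈ (R2 : Subgroup Γ) := by
    rw [← hc]
    show c * u * c⁻¹ ∈ ((c • R3 : Sylow p Γ) : Subgroup Γ)
    rw [Sylow.smul_def, Sylow.pointwise_smul_def]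
    simpa [MulAut.smul_def] using
      Subgroup.smul_mem_pointwise_smul u (MulAut.conj c) _ (hR3 (Subgroup.mem_zpowers u))
  rw [← hP2R2] at hmem
  exact Subgroup.map_subtype_le _ hmem

/-- Let `G` be a finite group with `3³` exactly dividing `|G|`, and suppose `G` has a
subgroup `H` such that `3` divides `|Z(H)|` and `H/Z(H)` has a subgroup isomorphic to
`A₆`.  Then `C₉` does not embed into `G`. -/
theorem stmt19 (G : Type*) [Group G] [Finite G]
    (h27 : 3 ^ 3 ∣ Nat.card G) (h81 : ¬ 3 ^ 4 ∣ Nat.card G)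
    (H : Subgroup G)
    (hZ : 3 ∣ Nat.card (Subgroup.center H))
    (hA6 : ∃ K : Subgroup (H ⧸ Subgroup.center H),
      Nonempty (K ≃* alternatingGroup (Fin 6))) :
    ¬ ∃ f : Multiplicative (ZMod 9) →* G, Function.Injective f := by
  haveI hp3 : Fact (Nat.Prime 3) := ⟨by norm_num⟩
  rintro ⟨f, hf⟩
  obtain ⟨K, ⟨e⟩⟩ := hA6
  set Z := Subgroup.center H with hZdef
  -- cardinalities
  have hGpos : Nat.card G ≠ 0 := Nat.card_pos.ne'
  have hHpos : Nat.card H ≠ 0 := Nat.card_pos.ne'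
  have hZpos : Nat.card Z ≠ 0 := Nat.card_pos.ne'
  have hQpos : Nat.card (H ⧸ Z) ≠ 0 := Nat.card_pos.ne'
  have hcK : Nat.card K = 360 := by
    rw [Nat.card_congr e.toEquiv, Nat.card_eq_fintype_card]
    have h2 := two_mul_card_alternatingGroup (α := Fin 6)
    rw [Fintype.card_perm] at h2
    simp only [Fintype.card_fin] at h2
    have h3 : (6:ℕ).factorial = 720 := by decide
    rw [h3] at h2
    omega
  have h360Q : (360 : ℕ) ∣ Nat.card (H ⧸ Z) := hcK ▸ Subgroup.card_subgroup_dvd_card K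
  have hHeq : Nat.card H = Nat.card (H ⧸ Z) * Nat.card Z :=
    Subgroup.card_eq_card_quotient_mul_card_subgroup Z
  have h9Q : (9 : ℕ) ∣ Nat.card (H ⧸ Z) := dvd_trans (by norm_num) h360Q
  have h27H : (27 : ℕ) ∣ Nat.card H := by
    rw [hHeq]
    exact mul_dvd_mul h9Q hZ
  have hHdvdG : Nat.card H ∣ Nat.card G := Subgroup.card_subgroup_dvd_card H
  have h9Z : ¬ (9 ∣ Nat.card Z) := by
    intro h9
    apply h81
    refine dvd_trans ?_ hHdvdG
    rw [hHeq]
    calc (3:ℕ)^4 = 9 * 9 := by norm_num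
    _ ∣ _ := mul_dvd_mul h9Q h9
  -- factorization facts
  have hfG : (Nat.card G).factorization 3 = 3 := by
    have hge : 3 ≤ (Nat.card G).factorization 3 :=
      (Nat.Prime.pow_dvd_iff_le_factorization (by norm_num) hGpos).1 h27
    have hlt : ¬ 4 ≤ (Nat.card G).factorization 3 := fun h =>
      h81 ((Nat.Prime.pow_dvd_iff_le_factorization (by norm_num) hGpos).2 h)
    omega
  have hfH3 : 3 ≤ (Nat.card H).factorization 3 :=
    (Nat.Prime.pow_dvd_iff_le_factorization (by norm_num) hHpos).1
      (by rw [show (3:ℕ)^3 = 27 by norm_num]; exact h27H)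
  have hfZ1 : 1 ≤ (Nat.card Z).factorization 3 :=
    (Nat.Prime.pow_dvd_iff_le_factorization (by norm_num) hZpos).1 (by simpa using hZ)
  have hfQ2 : 2 ≤ (Nat.card (H ⧸ Z)).factorization 3 :=
    (Nat.Prime.pow_dvd_iff_le_factorization (by norm_num) hQpos).1
      (by rw [show (3:ℕ)^2 = 9 by norm_num]; exact h9Q)
  have hfHle : (Nat.card H).factorization 3 ≤ 3 := by
    by_contra hlt
    push_neg at hlt
    exact h81 (dvd_trans
      ((Nat.Prime.pow_dvd_iff_le_factorization (by norm_num) hHpos).2 (by omega)) hHdvdG)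
  have hfsplit : (Nat.card (H ⧸ Z)).factorization 3 + (Nat.card Z).factorization 3
      = (Nat.card H).factorization 3 := by
    rw [hHeq, Nat.factorization_mul hQpos hZpos]
    simp
  have hfQle : (Nat.card (H ⧸ Z)).factorization 3 ≤ 2 := by omega
  have hfK2 : 2 ≤ (Nat.card K).factorization 3 := by
    rw [hcK]
    exact (Nat.Prime.pow_dvd_iff_le_factorization (by norm_num) (by norm_num)).1 (by norm_num)
  -- conjugate the order-9 element into H
  set g := f (Multiplicative.ofAdd (1 : ZMod 9)) with hgdef
  have hg : orderOf g = 9 := by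
    rw [hgdef, orderOf_injective f hf, orderOf_ofAdd_eq_addOrderOf, ZMod.addOrderOf_one]
  have hg9 : g ^ 3 ^ 2 = 1 := by
    rw [show (3:ℕ)^2 = 9 by norm_num, ← hg]
    exact pow_orderOf_eq_one g
  obtain ⟨c, hcH⟩ := conjInto (p := 3) H (by rw [hfG]; exact hfH3) hg9
  have hx'9 : orderOf (c * g * c⁻¹) = 9 := by
    rw [← (SemiconjBy.orderOf_eq c (show c * g = (c * g * c⁻¹) * c by group))]
    exact hg
  set x : H := ⟨c * g * c⁻¹, hcH⟩ with hxdef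
  have hx9 : orderOf x = 9 := by rw [hxdef, Subgroup.orderOf_mk]; exact hx'9
  -- no elements of order 9 in H ⧸ Z
  have hQ3 : ∀ u : H ⧸ Z, u ^ 9 = 1 → u ^ 3 = 1 := by
    intro u hu
    obtain ⟨c2, hc2⟩ := conjInto (p := 3) K (le_trans hfQle hfK2) (k := 2)
      (by rw [show (3:ℕ)^2 = 9 by norm_num, hu])
    set κ : K := ⟨c2 * u * c2⁻¹, hc2⟩ with hκdef
    have hκ9 : κ ^ 9 = 1 := by
      apply Subtype.coe_injective
      push_cast
      rw [conj_pow, hu]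
      group
    have h9κ : (↑(e κ) : Equiv.Perm (Fin 6)) ^ 9 = 1 := by
      rw [← SubmonoidClass.coe_pow, ← map_pow, hκ9, map_one, OneMemClass.coe_one]
    have h3κ := permFin6_pow_nine h9κ
    have hκ3 : κ ^ 3 = 1 := by
      apply e.injective
      rw [map_pow, map_one]
      have : (↑(e κ ^ 3) : Equiv.Perm (Fin 6)) = ↑(1 : alternatingGroup (Fin 6)) := by
        rw [SubmonoidClass.coe_pow, OneMemClass.coe_one, h3κ]
      exact Subtype.coe_injective this
    have hconj3 : (c2 * u * c2⁻¹) ^ 3 = 1 := by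
      have h4 := congrArg Subtype.val hκ3
      push_cast at h4
      exact h4
    rw [conj_pow] at hconj3
    calc u ^ 3 = c2⁻¹ * (c2 * u ^ 3 * c2⁻¹) * c2 := by group
    _ = 1 := by rw [hconj3]; group
  -- x³ is central
  set π := QuotientGroup.mk' Z with hπdef
  have hx9H : x ^ 9 = 1 := by rw [← hx9]; exact pow_orderOf_eq_one x
  have hπx9 : (π x) ^ 9 = 1 := by rw [← map_pow, hx9H, map_one]
  have hπx3 : (π x) ^ 3 = 1 := hQ3 _ hπx9
  have hx3Z : x ^ 3 ∈ Z := by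
    have h5 : π (x ^ 3) = 1 := by rw [map_pow]; exact hπx3
    exact (QuotientGroup.eq_one_iff _).1 h5
  -- reality
  obtain ⟨c3, hc3⟩ := conjInto (p := 3) K (le_trans hfQle hfK2) (k := 2)
    (by rw [show (3:ℕ)^2 = 9 by norm_num]; exact hπx9)
  set κ : K := ⟨c3 * π x * c3⁻¹, hc3⟩ with hκdef
  have hκ3 : κ ^ 3 = 1 := by
    apply Subtype.coe_injective
    push_cast
    rw [conj_pow, hπx3]
    group
  have hσ3 : (↑(e κ) : Equiv.Perm (Fin 6)) ^ 3 = 1 := by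
    rw [← SubmonoidClass.coe_pow, ← map_pow, hκ3, map_one, OneMemClass.coe_one]
  obtain ⟨τ, hsgn, hτ⟩ := permFin6_real hσ3
  have hτA : (⟨τ, Equiv.Perm.mem_alternatingGroup.2 hsgn⟩ : alternatingGroup (Fin 6)) * e κ *
      (⟨τ, Equiv.Perm.mem_alternatingGroup.2 hsgn⟩ : alternatingGroup (Fin 6))⁻¹ = (e κ)⁻¹ := by
    apply Subtype.coe_injective
    push_cast
    exact hτ
  have ht : e.symm ⟨τ, Equiv.Perm.mem_alternatingGroup.2 hsgn⟩ * κ *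
      (e.symm ⟨τ, Equiv.Perm.mem_alternatingGroup.2 hsgn⟩)⁻¹ = κ⁻¹ := by
    apply e.injective
    rw [map_mul, map_mul, map_inv, map_inv, MulEquiv.apply_symm_apply, hτA]
  set t : H ⧸ Z := ↑(e.symm ⟨τ, Equiv.Perm.mem_alternatingGroup.2 hsgn⟩) with htdef
  have htQ : t * (c3 * π x * c3⁻¹) * t⁻¹ = (c3 * π x * c3⁻¹)⁻¹ := by
    have h6 := congrArg Subtype.val ht
    push_cast at h6
    exact h6
  have hkey : (c3⁻¹ * t * c3) * π x * (c3⁻¹ * t * c3)⁻¹ = (π x)⁻¹ := by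
    calc (c3⁻¹ * t * c3) * π x * (c3⁻¹ * t * c3)⁻¹
        = c3⁻¹ * (t * (c3 * π x * c3⁻¹) * t⁻¹) * c3 := by group
      _ = c3⁻¹ * (c3 * π x * c3⁻¹)⁻¹ * c3 := by rw [htQ]
      _ = (π x)⁻¹ := by group
  obtain ⟨h, hh⟩ := QuotientGroup.mk'_surjective Z (c3⁻¹ * t * c3)
  have hwZ : h * x * h⁻¹ * x ∈ Z := by
    apply (QuotientGroup.eq_one_iff _).1
    show π (h * x * h⁻¹ * x) = 1
    rw [map_mul, map_mul, map_mul, map_inv, hh, hkey]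
    simp
  set w : H := h * x * h⁻¹ * x with hwdef
  have hcomm : ∀ y : H, y * w = w * y := fun y => (Subgroup.mem_center_iff.1 hwZ) y
  have hzc : ∀ y : H, y * x ^ 3 = x ^ 3 * y := fun y => (Subgroup.mem_center_iff.1 hx3Z) y
  have hhxh : h * x * h⁻¹ = w * x⁻¹ := by rw [hwdef]; group
  have e2 : h * x ^ 3 * h⁻¹ = x ^ 3 := by rw [hzc h, mul_assoc]; simp
  have e1 : h * x ^ 3 * h⁻¹ = w ^ 3 * x⁻¹ ^ 3 := by
    rw [← conj_pow, hhxh]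
    exact (show Commute w x⁻¹ from (hcomm x⁻¹).symm).mul_pow 3
  have hw3 : w ^ 3 = x ^ 6 := by
    have hx6 : x ^ 3 = w ^ 3 * x⁻¹ ^ 3 := by rw [← e1, e2]
    calc w ^ 3 = w ^ 3 * x⁻¹ ^ 3 * x ^ 3 := by group
    _ = x ^ 3 * x ^ 3 := by rw [← hx6]
    _ = x ^ 6 := by group
  have hw9 : w ^ 9 = 1 := by
    have h7 : w ^ 9 = (x ^ 9) ^ 2 := by
      calc w ^ 9 = (w ^ 3) ^ 3 := by group
      _ = (x ^ 6) ^ 3 := by rw [hw3]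
      _ = (x ^ 9) ^ 2 := by group
    rw [h7, hx9H, one_pow]
  have hw3ne : w ^ 3 ≠ 1 := by
    rw [hw3]
    intro hone
    have h8 : (9 : ℕ) ∣ 6 := hx9 ▸ orderOf_dvd_of_pow_eq_one hone
    norm_num at h8
  have hworder : orderOf w = 9 := by
    have hd : orderOf w ∣ 3 ^ 2 := by
      rw [show (3:ℕ)^2 = 9 by norm_num]
      exact orderOf_dvd_of_pow_eq_one hw9
    obtain ⟨i, hile, hi⟩ := (Nat.dvd_prime_pow (by norm_num : Nat.Prime 3)).1 hd
    interval_cases i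
    · exact absurd (orderOf_dvd_iff_pow_eq_one.1 (by rw [hi]; exact one_dvd 3)) hw3ne
    · exact absurd (orderOf_dvd_iff_pow_eq_one.1 (by rw [hi]; norm_num)) hw3ne
    · rw [hi]; norm_num
  exact h9Z (hworder ▸ Z.orderOf_dvd_natCard hwZ)
end
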